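/- arXiv:2111.04925 — 7 statements merged into one kernel-verified Lean document; each statement's English description precedes it below -/
import Mathlib

section
/- For any k ≥ 1 and n ≥ 1, the number of binary words of length n containing a fixed binary word w of length k as a subsequence depends only on k (not on w); equivalently, it equals the number of binary words of length n containing 0^k as a subsequence. -/
private lemma words_finite (n : ℕ) (w : List Bool) :
    {v : List Bool | v.length = n ∧ w.Sublist v}.Finite :=
  (List.finite_length_eq Bool n).subset fun _ h => h.1

private lemma decomp (n : ℕ) (c : Bool) (t : List Bool) :
    {v : List Bool | v.length = n + 1 ∧ (c :: t).Sublist v}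
      = (c :: ·) '' {v : List Bool | v.length = n ∧ t.Sublist v}
        ∪ ((!c) :: ·) '' {v : List Bool | v.length = n ∧ (c :: t).Sublist v} := by
  ext v
  constructor
  · rintro ⟨hlen, hs⟩
    match v with
    | [] => simp at hlen
    | x :: v' =>
      simp only [List.length_cons, Nat.add_right_cancel_iff] at hlen
      by_cases hx : x = c
      · subst hx
        exact Or.inl ⟨v', ⟨hlen, (List.cons_sublist_cons).mp hs⟩, rfl⟩
      · have hx' : x = !c := by cases x <;> cases c <;> simp_all
        subst hx'
        refine Or.inr ⟨v', ⟨hlen, ?_⟩, rfl⟩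
        rcases List.sublist_cons_iff.mp hs with h | ⟨r, hr, h⟩
        · exact h
        · exact absurd (List.cons.injEq .. ▸ hr).1.symm hx
  · rintro (⟨v', ⟨hlen, hs⟩, rfl⟩ | ⟨v', ⟨hlen, hs⟩, rfl⟩)
    · exact ⟨by simp [hlen], hs.cons₂ c⟩
    · exact ⟨by simp [hlen], hs.cons _⟩

private lemma count_eq : ∀ (n : ℕ) (w w' : List Bool), w.length = w'.length →
    {v : List Bool | v.length = n ∧ w.Sublist v}.ncard
      = {v : List Bool | v.length = n ∧ w'.Sublist v}.ncard := by
  intro n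
  induction n with
  | zero =>
    intro w w' h
    match w, w' with
    | [], [] => rfl
    | a :: s, b :: u =>
      have h1 : {v : List Bool | v.length = 0 ∧ (a :: s).Sublist v} = ∅ := by
        ext v; simp only [Set.mem_setOf_eq, Set.mem_empty_iff_false, iff_false, not_and]
        rintro hv; rw [List.length_eq_zero_iff] at hv; subst hv
        simp
      have h2 : {v : List Bool | v.length = 0 ∧ (b :: u).Sublist v} = ∅ := by
        ext v; simp only [Set.mem_setOf_eq, Set.mem_empty_iff_false, iff_false, not_and]
        rintro hv; rw [List.length_eq_zero_iff] at hv; subst hv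
        simp
      rw [h1, h2]
    | [], b :: u => simp at h
    | a :: s, [] => simp at h
  | succ n ih =>
    intro w w' h
    match w, w' with
    | [], [] => rfl
    | [], b :: u => simp at h
    | a :: s, [] => simp at h
    | a :: s, b :: u =>
      simp only [List.length_cons, Nat.add_right_cancel_iff] at h
      have key : ∀ (c : Bool) (t : List Bool),
          {v : List Bool | v.length = n + 1 ∧ (c :: t).Sublist v}.ncard
            = {v : List Bool | v.length = n ∧ t.Sublist v}.ncard
              + {v : List Bool | v.length = n ∧ (c :: t).Sublist v}.ncard := by
        intro c t
        have disj : Disjoint ((c :: ·) '' {v : List Bool | v.length = n ∧ t.Sublist v})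
            (((!c) :: ·) '' {v : List Bool | v.length = n ∧ (c :: t).Sublist v}) := by
          rw [Set.disjoint_left]
          rintro v ⟨v1, _, rfl⟩ ⟨v2, _, h2⟩
          simp at h2
        rw [decomp n c t,
          Set.ncard_union_eq disj ((words_finite n t).image _)
            ((words_finite n (c :: t)).image _),
          Set.ncard_image_of_injective _ (List.cons_injective),
          Set.ncard_image_of_injective _ (List.cons_injective)]
      rw [key a s, key b u, ih s u h, ih (a :: s) (b :: u) (by simp [h])]

/-- The number of binary words of length `n` containing a fixed word `w` of
length `k` as a subsequence depends only on `k`: it equals the number of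
those containing `0^k`. -/
theorem binary_words_containing_count (n k : ℕ) (hn : 1 ≤ n) (hk : 1 ≤ k)
    (w : List Bool) (hw : w.length = k) :
    {v : List Bool | v.length = n ∧ w.Sublist v}.ncard
      = {v : List Bool | v.length = n ∧ (List.replicate k false).Sublist v}.ncard := by
  exact count_eq n w (List.replicate k false) (by simp [hw])
end

section
/- For n ≥ 2, the number of circular permutations of [n] avoiding the circular pattern [1342] equals 2^{n-1} - (n-1). -/
/-- `t` is order-isomorphic to the pattern `p` (entrywise order comparison). -/
def IsoTo (t p : List ℕ) : Prop :=
  t.length = p.length ∧ ∀ i j, i < t.length → j < t.length →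
    (t.getD i 0 < t.getD j 0 ↔ p.getD i 0 < p.getD j 0)

/-- `σ` (linearly) contains the pattern `π`: some subsequence of `σ` is
order-isomorphic to `π`. -/
def LContains (σ π : List ℕ) : Prop := ∃ t, t.Sublist σ ∧ IsoTo t π

/-- The circular permutation `[σ]` contains the circular pattern `[π]`:
some cyclic rotation of `σ` linearly contains `π`. -/
def CContains (σ π : List ℕ) : Prop := ∃ k, LContains (σ.rotate k) π

/-- Canonical representative of a circular permutation of `[n]`:
a permutation of `1,…,n` (in one-line list form) starting with `1`. -/
def IsCirc (n : ℕ) (l : List ℕ) : Prop :=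
  l.Perm (List.range' 1 n) ∧ l.head? = some 1

namespace Avoid1342

open List

def Av231 (l : List ℕ) : Prop := ¬ ∃ x y z : ℕ, [x,y,z] <+ l ∧ z < x ∧ x < y
def Av213 (l : List ℕ) : Prop := ¬ ∃ x y z : ℕ, [x,y,z] <+ l ∧ y < x ∧ x < z
def Av2134 (l : List ℕ) : Prop := ¬ ∃ w x y z : ℕ, [w,x,y,z] <+ l ∧ x < w ∧ w < y ∧ y < z
def Av4213 (l : List ℕ) : Prop := ¬ ∃ w x y z : ℕ, [w,x,y,z] <+ l ∧ y < x ∧ x < z ∧ z < w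
def Av3 (l : List ℕ) : Prop := Av231 l ∧ Av2134 l ∧ Av4213 l

lemma av231_sublist {t l : List ℕ} (h : t <+ l) (ha : Av231 l) : Av231 t := by
  rintro ⟨x,y,z,hs,h1,h2⟩; exact ha ⟨x,y,z,hs.trans h,h1,h2⟩
lemma av213_sublist {t l : List ℕ} (h : t <+ l) (ha : Av213 l) : Av213 t := by
  rintro ⟨x,y,z,hs,h1,h2⟩; exact ha ⟨x,y,z,hs.trans h,h1,h2⟩
lemma av2134_sublist {t l : List ℕ} (h : t <+ l) (ha : Av2134 l) : Av2134 t := by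
  rintro ⟨w,x,y,z,hs,h1,h2,h3⟩; exact ha ⟨w,x,y,z,hs.trans h,h1,h2,h3⟩
lemma av4213_sublist {t l : List ℕ} (h : t <+ l) (ha : Av4213 l) : Av4213 t := by
  rintro ⟨w,x,y,z,hs,h1,h2,h3⟩; exact ha ⟨w,x,y,z,hs.trans h,h1,h2,h3⟩
lemma av3_sublist {t l : List ℕ} (h : t <+ l) (ha : Av3 l) : Av3 t :=
  ⟨av231_sublist h ha.1, av2134_sublist h ha.2.1, av4213_sublist h ha.2.2⟩

lemma isoTo_1342 (a b c d : ℕ) :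
    IsoTo [a,b,c,d] [1,3,4,2] ↔ a < d ∧ d < b ∧ b < c := by
  constructor
  · rintro ⟨-, h⟩
    have h03 := h 0 3 (by norm_num) (by norm_num)
    have h31 := h 3 1 (by norm_num) (by norm_num)
    have h12 := h 1 2 (by norm_num) (by norm_num)
    simp [List.getD] at h03 h31 h12
    omega
  · rintro ⟨h1,h2,h3⟩
    refine ⟨rfl, ?_⟩
    intro i j hi hj
    simp only [List.length_cons, List.length_nil] at hi hj
    interval_cases i <;> interval_cases j <;> simp [List.getD] <;> omega
-- bridge lemmas
lemma sl_tail3 (a b c d : ℕ) : [b,c,d] <+ [a,b,c,d] := List.sublist_cons_self a _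

lemma cc_of_not_av3 {t : List ℕ} (hgt : ∀ x ∈ t, 1 < x) (h : ¬ Av3 (1 :: t)) :
    CContains (1 :: t) [1,3,4,2] := by
  set l := 1 :: t with hl
  have hcases : (¬ Av231 l) ∨ (¬ Av2134 l) ∨ (¬ Av4213 l) := by
    by_contra hc; push_neg at hc; exact h ⟨hc.1, hc.2.1, hc.2.2⟩
  rcases hcases with h1 | h2 | h3
  · rw [Av231, not_not] at h1
    obtain ⟨x,y,z,hs,hzx,hxy⟩ := h1
    rcases (List.sublist_cons_iff).mp hs with hs' | ⟨r, hr, hrs⟩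
    · refine ⟨0, [1,x,y,z], ?_, ?_⟩
      · rw [List.rotate_zero, hl]; exact hs'.cons₂ 1
      · refine (isoTo_1342 1 x y z).mpr ⟨?_, hzx, hxy⟩
        have hz : z ∈ t := hs'.subset (by simp)
        exact hgt z hz
    · -- x = 1, impossible since z < x
      have hx : x = 1 := by injection hr
      have hz : z ∈ t := by
        have h2 : [y,z] <+ t := by
          have hr2 : r = [y,z] := by injection hr with _ h2; exact h2.symm
          rwa [hr2] at hrs
        exact h2.subset (by simp)
      have := hgt z hz; omega
  · rw [Av2134, not_not] at h2
    obtain ⟨w,x,y,z,hs,h1,h2,h3⟩ := h2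
    have hs' : [w] ++ [x,y,z] <+ l := hs
    obtain ⟨u,v,hluv,hu,hv⟩ := List.append_sublist_iff.mp hs'
    refine ⟨u.length, [x,y,z,w], ?_, ?_⟩
    · rw [hluv, List.rotate_append_length_eq]
      exact (hv.append hu : [x,y,z] ++ [w] <+ v ++ u)
    · exact (isoTo_1342 x y z w).mpr ⟨h1, h2, h3⟩
  · rw [Av4213, not_not] at h3
    obtain ⟨w,x,y,z,hs,h1,h2,h3⟩ := h3
    have hs' : [w,x] ++ [y,z] <+ l := hs
    obtain ⟨u,v,hluv,hu,hv⟩ := List.append_sublist_iff.mp hs'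
    refine ⟨u.length, [y,z,w,x], ?_, ?_⟩
    · rw [hluv, List.rotate_append_length_eq]
      exact (hv.append hu : [y,z] ++ [w,x] <+ v ++ u)
    · exact (isoTo_1342 y z w x).mpr ⟨h1, h2, h3⟩

lemma not_av3_of_cc {l : List ℕ} (hne : l ≠ []) (h : CContains l [1,3,4,2]) : ¬ Av3 l := by
  intro hav
  obtain ⟨k, tt, hsub, hiso⟩ := h
  have hlen := hiso.1
  match tt, hlen, hsub, hiso with
  | [a,b,c,d], _, hsub, hiso =>
  obtain ⟨hc1, hc2, hc3⟩ := (isoTo_1342 a b c d).mp hiso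
  rw [← List.rotate_mod] at hsub
  have hk' : k % l.length ≤ l.length := (Nat.mod_lt _ (List.length_pos_iff.mpr hne)).le
  rw [List.rotate_eq_drop_append_take hk'] at hsub
  obtain ⟨t1, t2, ht, h1, h2⟩ := List.sublist_append_iff.mp hsub
  have hL : t2 ++ t1 <+ l := by
    have := h2.append h1
    rwa [List.take_append_drop] at this
  rcases t1 with _ | ⟨e1, _ | ⟨e2, _ | ⟨e3, _ | ⟨e4, t5⟩⟩⟩⟩
  · simp only [List.nil_append] at ht
    subst ht
    simp only [List.append_nil] at hL
    exact hav.1 ⟨b,c,d, (sl_tail3 a b c d).trans hL, hc2, hc3⟩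
  · simp only [List.cons_append, List.nil_append, List.cons.injEq] at ht
    obtain ⟨he, ht2⟩ := ht
    subst he; subst ht2
    exact hav.1 ⟨b,c,d,
      ((((List.nil_sublist [a]).cons₂ d).cons₂ c).cons₂ b : [b,c,d] <+ [b,c,d,a]).trans hL,
      hc2, hc3⟩
  · simp only [List.cons_append, List.nil_append, List.cons.injEq] at ht
    obtain ⟨he1, he2, ht2⟩ := ht
    subst he1; subst he2; subst ht2
    exact hav.2.2 ⟨c,d,a,b, hL, hc1, hc2, hc3⟩
  · simp only [List.cons_append, List.nil_append, List.cons.injEq] at ht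
    obtain ⟨he1, he2, he3, ht2⟩ := ht
    subst he1; subst he2; subst he3; subst ht2
    exact hav.2.1 ⟨d,a,b,c, hL, hc1, hc2, hc3⟩
  · simp only [List.cons_append, List.cons.injEq] at ht
    obtain ⟨he1, he2, he3, he4, ht2⟩ := ht
    obtain ⟨h5, h6⟩ : t5 = [] ∧ t2 = [] := List.append_eq_nil_iff.mp ht2.symm
    subst h5; subst h6
    subst he1; subst he2; subst he3; subst he4
    simp only [List.nil_append, List.append_nil] at hL
    exact hav.1 ⟨_,_,_, (sl_tail3 _ _ _ _).trans hL, hc2, hc3⟩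
-- min-max words
def mm (lo : ℕ) : List Bool → List ℕ
  | [] => [lo]
  | b :: bs => if b then lo :: mm (lo+1) bs else (lo + bs.length + 1) :: mm lo bs

lemma mm_perm (bs : List Bool) (lo : ℕ) : (mm lo bs).Perm (List.range' lo (bs.length + 1)) := by
  induction bs generalizing lo with
  | nil => simp [mm]
  | cons b bs ih =>
    cases b with
    | true =>
      simp only [mm, if_true]
      rw [List.length_cons, List.range'_succ]
      exact (ih (lo+1)).cons lo
    | false =>
      simp only [mm, Bool.false_eq_true, if_false]
      rw [List.length_cons]
      have h1 : List.range' lo (bs.length + 1 + 1) = List.range' lo (bs.length + 1) ++ [lo + (bs.length + 1)] := by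
        have := List.range'_concat (step := 1) (s := lo) (n := bs.length + 1)
        simpa using this
      rw [h1]
      refine List.Perm.trans ?_ (List.perm_append_singleton _ _).symm
      have h2 : lo + bs.length + 1 = lo + (bs.length + 1) := by omega
      rw [h2]
      exact (ih lo).cons _

lemma mm_mem {bs : List Bool} {lo x : ℕ} (h : x ∈ mm lo bs) :
    lo ≤ x ∧ x ≤ lo + bs.length := by
  have := ((mm_perm bs lo).mem_iff).mp h
  rw [List.mem_range'_1] at this
  omega

lemma mm_av (bs : List Bool) (lo : ℕ) : Av213 (mm lo bs) ∧ Av231 (mm lo bs) := by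
  induction bs generalizing lo with
  | nil =>
    constructor
    · rintro ⟨x,y,z,hs,-,-⟩; have := hs.length_le; simp [mm] at this
    · rintro ⟨x,y,z,hs,-,-⟩; have := hs.length_le; simp [mm] at this
  | cons b bs ih =>
    cases b with
    | true =>
      simp only [mm, if_true]
      have hbig : ∀ u ∈ mm (lo+1) bs, lo < u := fun u hu => by have := mm_mem hu; omega
      constructor
      · rintro ⟨x,y,z,hs,h1,h2⟩
        rcases List.sublist_cons_iff.mp hs with hs' | ⟨r, hr, hrs⟩
        · exact (ih (lo+1)).1 ⟨x,y,z,hs',h1,h2⟩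
        · have hx : x = lo := by injection hr
          have hr2 : r = [y,z] := by injection hr with _ h; exact h.symm
          subst hr2
          have hy : y ∈ mm (lo+1) bs := hrs.subset (by simp)
          have := hbig y hy; omega
      · rintro ⟨x,y,z,hs,h1,h2⟩
        rcases List.sublist_cons_iff.mp hs with hs' | ⟨r, hr, hrs⟩
        · exact (ih (lo+1)).2 ⟨x,y,z,hs',h1,h2⟩
        · have hx : x = lo := by injection hr
          have hr2 : r = [y,z] := by injection hr with _ h; exact h.symm
          subst hr2
          have hz : z ∈ mm (lo+1) bs := hrs.subset (by simp)
          have := hbig z hz; omega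
    | false =>
      simp only [mm, Bool.false_eq_true, if_false]
      have hsmall : ∀ u ∈ mm lo bs, u < lo + bs.length + 1 := fun u hu => by
        have := mm_mem hu; omega
      constructor
      · rintro ⟨x,y,z,hs,h1,h2⟩
        rcases List.sublist_cons_iff.mp hs with hs' | ⟨r, hr, hrs⟩
        · exact (ih lo).1 ⟨x,y,z,hs',h1,h2⟩
        · have hx : x = lo + bs.length + 1 := by injection hr
          have hr2 : r = [y,z] := by injection hr with _ h; exact h.symm
          subst hr2
          have hz : z ∈ mm lo bs := hrs.subset (by simp)
          have := hsmall z hz; omega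
      · rintro ⟨x,y,z,hs,h1,h2⟩
        rcases List.sublist_cons_iff.mp hs with hs' | ⟨r, hr, hrs⟩
        · exact (ih lo).2 ⟨x,y,z,hs',h1,h2⟩
        · have hx : x = lo + bs.length + 1 := by injection hr
          have hr2 : r = [y,z] := by injection hr with _ h; exact h.symm
          subst hr2
          have hy : y ∈ mm lo bs := hrs.subset (by simp)
          have := hsmall y hy; omega

lemma mm_length (bs : List Bool) (lo : ℕ) : (mm lo bs).length = bs.length + 1 := by
  have := (mm_perm bs lo).length_eq
  simpa using this

lemma mm_inj : ∀ (bs₁ bs₂ : List Bool) (lo : ℕ), bs₁.length = bs₂.length →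
    mm lo bs₁ = mm lo bs₂ → bs₁ = bs₂ := by
  intro bs₁
  induction bs₁ with
  | nil => intro bs₂ lo hlen _; cases bs₂ <;> simp_all
  | cons b bs ih =>
    intro bs₂ lo hlen heq
    cases bs₂ with
    | nil => simp at hlen
    | cons b' bs₂' =>
      have hlen' : bs.length = bs₂'.length := by simpa using hlen
      cases b <;> cases b' <;> simp only [mm, if_true, Bool.false_eq_true, if_false] at heq
      · -- false false
        have htl : mm lo bs = mm lo bs₂' := by injection heq
        rw [ih bs₂' lo hlen' htl]
      · -- false true
        have : lo + bs.length + 1 = lo := by injection heq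
        omega
      · -- true false
        have : lo = lo + bs₂'.length + 1 := by injection heq
        omega
      · -- true true
        have htl : mm (lo+1) bs = mm (lo+1) bs₂' := by injection heq
        rw [ih bs₂' (lo+1) hlen' htl]

-- descending runs
def dsc (a c : ℕ) : List ℕ := (List.range' a c).reverse

lemma dsc_pairwise (a c : ℕ) : (dsc a c).Pairwise (fun x y => y < x) := by
  rw [dsc, List.pairwise_reverse]
  exact List.pairwise_lt_range' (s := a) (n := c)

lemma dsc_mem {a c x : ℕ} (h : x ∈ dsc a c) : a ≤ x ∧ x < a + c := by
  rw [dsc, List.mem_reverse, List.mem_range'_1] at h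
  exact h

-- bool lists of length < t
def blt : ℕ → Finset (List Bool)
  | 0 => ∅
  | t+1 => {[]} ∪ (blt t).image (true :: ·) ∪ (blt t).image (false :: ·)

lemma mem_blt (t : ℕ) (bs : List Bool) : bs ∈ blt t ↔ bs.length < t := by
  induction t generalizing bs with
  | zero => simp [blt]
  | succ t ih =>
    cases bs with
    | nil => simp [blt]
    | cons b bs' =>
      simp only [blt, Finset.mem_union, Finset.mem_singleton, Finset.mem_image]
      constructor
      · rintro ((h | ⟨a, ha, hab⟩) | ⟨a, ha, hab⟩)
        · exact absurd h (by simp)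
        · have := (ih a).mp ha
          have hl := congrArg List.length hab
          simp only [List.length_cons] at hl ⊢
          omega
        · have := (ih a).mp ha
          have hl := congrArg List.length hab
          simp only [List.length_cons] at hl ⊢
          omega
      · intro h
        simp only [List.length_cons] at h
        have : bs' ∈ blt t := (ih bs').mpr (by omega)
        cases b with
        | true => exact Or.inl (Or.inr ⟨bs', this, rfl⟩)
        | false => exact Or.inr ⟨bs', this, rfl⟩

lemma card_blt (t : ℕ) : (blt t).card = 2 ^ t - 1 := by
  induction t with
  | zero => simp [blt]
  | succ t ih =>
    have hcons : ∀ b : Bool, Function.Injective (fun bs : List Bool => b :: bs) := by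
      intro b x y h; injection h
    have hd1 : Disjoint ({[]} : Finset (List Bool)) ((blt t).image (true :: ·) ∪ (blt t).image (false :: ·)) := by
      rw [Finset.disjoint_left]
      intro a ha hb
      simp only [Finset.mem_singleton] at ha
      subst ha
      simp only [Finset.mem_union, Finset.mem_image] at hb
      rcases hb with ⟨x,-,h⟩ | ⟨x,-,h⟩ <;> exact nomatch h
    have hd2 : Disjoint ((blt t).image (true :: ·)) ((blt t).image (false :: ·)) := by
      rw [Finset.disjoint_left]
      intro a ha hb
      simp only [Finset.mem_image] at ha hb
      obtain ⟨x,-,hx⟩ := ha; obtain ⟨y,-,hy⟩ := hb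
      rw [← hx] at hy
      simp at hy
    have : blt (t+1) = {[]} ∪ ((blt t).image (true :: ·) ∪ (blt t).image (false :: ·)) := by
      rw [blt]; rw [Finset.union_assoc]
    rw [this, Finset.card_union_of_disjoint hd1, Finset.card_union_of_disjoint hd2,
      Finset.card_image_of_injective _ (hcons true), Finset.card_image_of_injective _ (hcons false),
      ih]
    have h1 : 1 ≤ 2 ^ t := Nat.one_le_two_pow
    simp only [Finset.card_singleton]
    have : 2 ^ (t+1) = 2 * 2 ^ t := by rw [pow_succ]; ring
    omega
-- prepending a minimum preserves avoidance
lemma av3_cons_min {h : ℕ} {t : List ℕ} (hlt : ∀ x ∈ t, h < x) (ha : Av3 t) :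
    Av3 (h :: t) := by
  refine ⟨?_, ?_, ?_⟩
  · rintro ⟨x,y,z,hs,h1,h2⟩
    rcases List.sublist_cons_iff.mp hs with hs' | ⟨r, hr, hrs⟩
    · exact ha.1 ⟨x,y,z,hs',h1,h2⟩
    · have hx : x = h := by injection hr
      have hr2 : r = [y,z] := by injection hr with _ hh; exact hh.symm
      subst hr2
      have hz : z ∈ t := hrs.subset (by simp)
      have := hlt z hz; omega
  · rintro ⟨w,x,y,z,hs,h1,h2,h3⟩
    rcases List.sublist_cons_iff.mp hs with hs' | ⟨r, hr, hrs⟩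
    · exact ha.2.1 ⟨w,x,y,z,hs',h1,h2,h3⟩
    · have hw : w = h := by injection hr
      have hr2 : r = [x,y,z] := by injection hr with _ hh; exact hh.symm
      subst hr2
      have hx : x ∈ t := hrs.subset (by simp)
      have := hlt x hx; omega
  · rintro ⟨w,x,y,z,hs,h1,h2,h3⟩
    rcases List.sublist_cons_iff.mp hs with hs' | ⟨r, hr, hrs⟩
    · exact ha.2.2 ⟨w,x,y,z,hs',h1,h2,h3⟩
    · have hw : w = h := by injection hr
      have hr2 : r = [x,y,z] := by injection hr with _ hh; exact hh.symm
      subst hr2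
      have hz : z ∈ t := hrs.subset (by simp)
      have := hlt z hz; omega

section core
variable {k : ℕ} {α δ : List ℕ}

lemma sub_alpha (hα : ∀ a ∈ α, a < k) (hδ : ∀ d ∈ δ, k < d)
    {o : List ℕ} (ho : o <+ α ++ δ) (hall : ∀ u ∈ o, u < k) : o <+ α := by
  have h2 := ho.filter (fun u => decide (u < k))
  have e1 : o.filter (fun u => decide (u < k)) = o :=
    List.filter_eq_self.mpr (fun a ha => by simpa using hall a ha)
  have e2 : α.filter (fun u => decide (u < k)) = α :=
    List.filter_eq_self.mpr (fun a ha => by simpa using hα a ha)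
  have e3 : δ.filter (fun u => decide (u < k)) = [] :=
    List.filter_eq_nil_iff.mpr (fun a ha => by have := hδ a ha; simp; omega)
  rw [List.filter_append, e1, e2, e3, List.append_nil] at h2
  exact h2

lemma pair_desc (hα : ∀ a ∈ α, a < k) (hδ : ∀ d ∈ δ, k < d)
    (hδp : δ.Pairwise (fun x y => y < x))
    {u v : ℕ} (ho : [u,v] <+ α ++ δ) (hu : k < u) (hv : k < v) : v < u := by
  have h2 := ho.filter (fun x => decide (k < x))
  have e1 : [u,v].filter (fun x => decide (k < x)) = [u,v] := by
    simp [List.filter, hu, hv]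
  have e2 : α.filter (fun x => decide (k < x)) = [] :=
    List.filter_eq_nil_iff.mpr (fun a ha => by have := hα a ha; simp; omega)
  have e3 : δ.filter (fun x => decide (k < x)) = δ :=
    List.filter_eq_self.mpr (fun a ha => by simpa using hδ a ha)
  rw [List.filter_append, e1, e2, e3, List.nil_append] at h2
  exact List.pairwise_iff_forall_sublist.mp hδp h2

lemma pair_order (hα : ∀ a ∈ α, a < k) (hδ : ∀ d ∈ δ, k < d)
    {u v : ℕ} (ho : [u,v] <+ α ++ δ) (hu : k < u) (hv : v < k) : False := by
  rcases List.sublist_append_iff.mp ho with ⟨s1, s2, he, h1, h2⟩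
  rcases s1 with _ | ⟨a1, _ | ⟨a2, s⟩⟩
  · simp only [List.nil_append] at he
    subst he
    have : v ∈ δ := h2.subset (by simp)
    have := hδ v this; omega
  · simp only [List.cons_append, List.cons.injEq] at he
    obtain ⟨he1, -⟩ := he
    subst he1
    have : u ∈ α := h1.subset (by simp)
    have := hα u this; omega
  · simp only [List.cons_append, List.cons.injEq] at he
    obtain ⟨he1, -, -⟩ := he
    subst he1
    have : u ∈ α := h1.subset (by simp)
    have := hα u this; omega

lemma av3_core (hα : ∀ a ∈ α, a < k) (hδ : ∀ d ∈ δ, k < d)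
    (hδp : δ.Pairwise (fun x y => y < x))
    (h213 : Av213 α) (h231 : Av231 α) :
    Av3 (k :: (α ++ δ)) := by
  have ne_k : ∀ u ∈ α ++ δ, u ≠ k := by
    intro u hu
    rcases List.mem_append.mp hu with h | h
    · have := hα u h; omega
    · have := hδ u h; omega
  refine ⟨?_, ?_, ?_⟩
  · -- Av231
    rintro ⟨x,y,z,hs,hzx,hxy⟩
    rcases List.sublist_cons_iff.mp hs with hT | ⟨r, hr, hrs⟩
    · have hxm : x ∈ α ++ δ := hT.subset (by simp)
      have hym : y ∈ α ++ δ := hT.subset (by simp)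
      have hzm : z ∈ α ++ δ := hT.subset (by simp)
      rcases (ne_k x hxm).lt_or_gt with hx | hx
      · rcases (ne_k y hym).lt_or_gt with hy | hy
        · exact h231 ⟨x,y,z, sub_alpha hα hδ hT (by rintro u hu; simp at hu; rcases hu with rfl|rfl|rfl <;> omega), hzx, hxy⟩
        · exact pair_order hα hδ ((List.sublist_cons_self x [y,z]).trans hT) hy (by omega)
      · have hy : k < y := by omega
        have := pair_desc hα hδ hδp ((((List.nil_sublist [z]).cons₂ y).cons₂ x).trans hT) hx hy
        omega
    · have hx : x = k := by injection hr
      have hr2 : r = [y,z] := by injection hr with _ hh; exact hh.symm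
      subst hr2
      exact pair_order hα hδ hrs (by omega) (by omega)
  · -- Av2134
    rintro ⟨w,x,y,z,hs,h1,h2,h3⟩
    rcases List.sublist_cons_iff.mp hs with hT | ⟨r, hr, hrs⟩
    · have hwm : w ∈ α ++ δ := hT.subset (by simp)
      have hxm : x ∈ α ++ δ := hT.subset (by simp)
      have hym : y ∈ α ++ δ := hT.subset (by simp)
      rcases (ne_k w hwm).lt_or_gt with hw | hw
      · rcases (ne_k y hym).lt_or_gt with hy | hy
        · -- w,x,y all < k : 213 in α
          have hsub : [w,x,y] <+ α ++ δ :=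
            ((((List.nil_sublist [z]).cons₂ y).cons₂ x).cons₂ w).trans hT
          exact h213 ⟨w,x,y, sub_alpha hα hδ hsub (by rintro u hu; simp at hu; rcases hu with rfl|rfl|rfl <;> omega), h1, h2⟩
        · -- y > k, z > y > k : ascent in δ
          have hsub : [y,z] <+ α ++ δ :=
            (((List.sublist_cons_self x [y,z]).trans (List.sublist_cons_self w _))).trans hT
          have := pair_desc hα hδ hδp hsub hy (by omega)
          omega
      · rcases (ne_k x hxm).lt_or_gt with hx | hx
        · exact pair_order hα hδ ((((List.nil_sublist [y,z]).cons₂ x).cons₂ w).trans hT |>.trans (List.Sublist.refl _)) hw hx |>.elim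
        · have hsub : [x,y] <+ α ++ δ := by
            have : [x,y] <+ [x,y,z] := ((List.nil_sublist [z]).cons₂ y).cons₂ x
            exact (this.trans (List.sublist_cons_self w [x,y,z])).trans hT
          have := pair_desc hα hδ hδp hsub hx (by omega)
          omega
    · have hw : w = k := by injection hr
      have hr2 : r = [x,y,z] := by injection hr with _ hh; exact hh.symm
      subst hr2
      have hsub : [y,z] <+ α ++ δ := (List.sublist_cons_self x [y,z]).trans hrs
      have := pair_desc hα hδ hδp hsub (by omega) (by omega)
      omega
  · -- Av4213
    rintro ⟨w,x,y,z,hs,h1,h2,h3⟩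
    rcases List.sublist_cons_iff.mp hs with hT | ⟨r, hr, hrs⟩
    · have hwm : w ∈ α ++ δ := hT.subset (by simp)
      have hxm : x ∈ α ++ δ := hT.subset (by simp)
      rcases (ne_k w hwm).lt_or_gt with hw | hw
      · -- all < k : 213 in α via (x,y,z)
        have hsub : [x,y,z] <+ α ++ δ := (List.sublist_cons_self w [x,y,z]).trans hT
        exact h213 ⟨x,y,z, sub_alpha hα hδ hsub (by rintro u hu; simp at hu; rcases hu with rfl|rfl|rfl <;> omega), h1, h2⟩
      · rcases (ne_k x hxm).lt_or_gt with hx | hx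
        · exact pair_order hα hδ ((((List.nil_sublist [y,z]).cons₂ x).cons₂ w).trans hT) hw hx
        · have hsub : [x,z] <+ α ++ δ := by
            have h5 : [x,z] <+ [x,y,z] := (List.sublist_cons_self y [z]).cons₂ x
            exact (h5.trans (List.sublist_cons_self w [x,y,z])).trans hT
          have := pair_desc hα hδ hδp hsub hx (by omega)
          omega
    · have hw : w = k := by injection hr
      have hr2 : r = [x,y,z] := by injection hr with _ hh; exact hh.symm
      subst hr2
      exact h213 ⟨x,y,z, sub_alpha hα hδ hrs (by rintro u hu; simp at hu; rcases hu with rfl|rfl|rfl <;> omega), h1, h2⟩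

end core
def kword (lo s : ℕ) (bs : List Bool) : List ℕ :=
  (lo + bs.length + 1) :: (mm lo bs ++ dsc (lo + bs.length + 2) (s - bs.length - 1))

def famF : ℕ → ℕ → Finset (List ℕ)
  | _, 0 => {[]}
  | lo, s+1 => (famF (lo+1) s).image (lo :: ·) ∪ (blt s).image (kword lo s)

lemma av3_nil : Av3 ([] : List ℕ) := by
  refine ⟨?_, ?_, ?_⟩
  · rintro ⟨x,y,z,hs,-,-⟩; have := hs.length_le; simp at this
  · rintro ⟨w,x,y,z,hs,-,-,-⟩; have := hs.length_le; simp at this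
  · rintro ⟨w,x,y,z,hs,-,-,-⟩; have := hs.length_le; simp at this

lemma kword_perm {lo s : ℕ} {bs : List Bool} (h : bs.length < s) :
    (kword lo s bs).Perm (List.range' lo (s+1)) := by
  set L := bs.length with hL
  have hsplit : List.range' lo (s+1)
      = List.range' lo (L+1) ++ ((lo + L + 1) :: List.range' (lo + L + 2) (s - L - 1)) := by
    have h1 : List.range' lo (L+1) ++ List.range' (lo + 1 * (L+1)) (s - L) = List.range' lo ((s - L) + (L+1)) :=
      by rw [List.range'_append, Nat.add_comm (L+1)]
    have h2 : (s - L) + (L + 1) = s + 1 := by omega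
    have h3 : lo + 1 * (L + 1) = lo + L + 1 := by omega
    rw [h2, h3] at h1
    rw [← h1]
    congr 1
    have h4 : s - L = (s - L - 1) + 1 := by omega
    have h5 : lo + L + 1 + 1 = lo + L + 2 := by omega
    have h6 : s - L - 1 + 1 - 1 = s - L - 1 := by omega
    rw [h4, List.range'_succ, h5, h6]
  rw [kword, hsplit]
  refine List.Perm.trans ?_ List.perm_middle.symm
  exact ((mm_perm bs lo).append (((List.reverse_perm _)) : dsc (lo + L + 2) (s - L - 1) ~ _)).cons _

lemma kword_av3 {lo s : ℕ} {bs : List Bool} : Av3 (kword lo s bs) := by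
  rw [kword]
  refine av3_core ?_ ?_ (dsc_pairwise _ _) (mm_av bs lo).1 (mm_av bs lo).2
  · intro a ha; have := mm_mem ha; omega
  · intro d hd; have := dsc_mem hd; omega

lemma sound (s : ℕ) : ∀ (lo : ℕ) (w : List ℕ), w ∈ famF lo s →
    w.Perm (List.range' lo s) ∧ Av3 w := by
  induction s with
  | zero =>
    intro lo w hw
    simp only [famF, Finset.mem_singleton] at hw
    subst hw
    exact ⟨by simp, av3_nil⟩
  | succ s ih =>
    intro lo w hw
    simp only [famF, Finset.mem_union, Finset.mem_image] at hw
    rcases hw with ⟨w', hw', rfl⟩ | ⟨bs, hbs, rfl⟩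
    · obtain ⟨hperm, hav⟩ := ih (lo+1) w' hw'
      constructor
      · rw [List.range'_succ]; exact hperm.cons lo
      · refine av3_cons_min ?_ hav
        intro x hx
        have := (hperm.mem_iff).mp hx
        rw [List.mem_range'_1] at this
        omega
    · have hlen := (mem_blt s bs).mp hbs
      exact ⟨kword_perm hlen, kword_av3⟩
lemma dropWhile_head_false {α : Type*} (p : α → Bool) :
    ∀ (l : List α) {b0 : α} {B' : List α}, l.dropWhile p = b0 :: B' → p b0 = false := by
  intro l
  induction l with
  | nil => intro b0 B' h; simp [List.dropWhile] at h
  | cons a l ih =>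
    intro b0 B' h
    rw [List.dropWhile_cons] at h
    by_cases hp : p a
    · rw [if_pos hp] at h; exact ih h
    · rw [if_neg hp] at h
      have ha : a = b0 := by injection h
      rw [← ha]
      exact Bool.eq_false_iff.mpr hp

lemma sublist_pair_of_mem {l : List ℕ} {p q : ℕ} (hp : p ∈ l) (hq : q ∈ l) (hne : p ≠ q) :
    [p,q] <+ l ∨ [q,p] <+ l := by
  induction l with
  | nil => simp at hp
  | cons a l ih =>
    rcases List.mem_cons.mp hp with rfl | hp'
    · rcases List.mem_cons.mp hq with rfl | hq'
      · exact absurd rfl hne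
      · exact Or.inl ((List.singleton_sublist.mpr hq').cons₂ p)
    · rcases List.mem_cons.mp hq with rfl | hq'
      · exact Or.inr ((List.singleton_sublist.mpr hp').cons₂ q)
      · rcases ih hp' hq' with h | h
        · exact Or.inl (h.cons a)
        · exact Or.inr (h.cons a)

lemma mm_complete : ∀ (m lo : ℕ) (A : List ℕ), A.Perm (List.range' lo (m+1)) →
    Av213 A → Av231 A → ∃ bs : List Bool, bs.length = m ∧ A = mm lo bs := by
  intro m
  induction m with
  | zero =>
    intro lo A hp _ _
    have : A = [lo] := by
      rw [List.range'_one] at hp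
      exact List.perm_singleton.mp hp
    exact ⟨[], rfl, by rw [this]; rfl⟩
  | succ m ih =>
    intro lo A hp h213 h231
    cases A with
    | nil => have := hp.length_eq; simp at this
    | cons a A' =>
      have ha_mem : a ∈ List.range' lo (m+2) := hp.subset (by simp)
      rw [List.mem_range'_1] at ha_mem
      have key : a = lo ∨ a = lo + m + 1 := by
        by_contra hk
        push_neg at hk
        have hlo : lo < a := by omega
        have hhi : a < lo + m + 1 := by omega
        have hlo_mem : (lo : ℕ) ∈ A' := by
          have : lo ∈ a :: A' := hp.mem_iff.mpr (by rw [List.mem_range'_1]; omega)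
          rcases List.mem_cons.mp this with h | h
          · omega
          · exact h
        have hhi_mem : (lo + m + 1 : ℕ) ∈ A' := by
          have : lo + m + 1 ∈ a :: A' := hp.mem_iff.mpr (by rw [List.mem_range'_1]; omega)
          rcases List.mem_cons.mp this with h | h
          · omega
          · exact h
        rcases sublist_pair_of_mem hlo_mem hhi_mem (by omega) with h | h
        · exact h213 ⟨a, lo, lo + m + 1, h.cons₂ a, hlo, by omega⟩
        · exact h231 ⟨a, lo + m + 1, lo, h.cons₂ a, hlo, by omega⟩
      rcases key with hkey | hkey
      · -- a = lo
        have hp' : A'.Perm (List.range' (a+1) (m+1)) := by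
          rw [List.range'_succ, ← hkey] at hp
          exact hp.cons_inv
        obtain ⟨bs', hlen, hA'⟩ := ih (a+1) A'
          hp' (av213_sublist (List.sublist_cons_self a A') h213)
          (av231_sublist (List.sublist_cons_self a A') h231)
        refine ⟨true :: bs', by simp [hlen], ?_⟩
        simp only [mm, if_true]
        rw [hA', hkey]
      · -- a = lo + m + 1
        have hp' : A'.Perm (List.range' lo (m+1)) := by
          have h1 : List.range' lo (m+2) = List.range' lo (m+1) ++ [lo + (m+1)] := by
            have := List.range'_concat (step := 1) (s := lo) (n := m+1)
            simpa using this
          have h2 : a :: A' ~ (lo + (m+1)) :: List.range' lo (m+1) :=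
            hp.trans (by rw [h1]; exact List.perm_append_singleton _ _)
          have h3 : a = lo + (m + 1) := by omega
          rw [← h3] at h2
          exact h2.cons_inv
        obtain ⟨bs', hlen, hA'⟩ := ih lo A'
          hp' (av213_sublist (List.sublist_cons_self _ A') h213)
          (av231_sublist (List.sublist_cons_self _ A') h231)
        refine ⟨false :: bs', by simp [hlen], ?_⟩
        simp only [mm, Bool.false_eq_true, if_false]
        rw [hA', hlen, hkey]
lemma complete (s : ℕ) : ∀ (lo : ℕ) (w : List ℕ), w.Perm (List.range' lo s) → Av3 w →
    w ∈ famF lo s := by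
  induction s with
  | zero =>
    intro lo w hp _
    simp only [List.range'_zero] at hp
    simp only [famF, Finset.mem_singleton]
    exact List.perm_nil.mp hp
  | succ s ih =>
    intro lo w hperm hav
    cases w with
    | nil => have := hperm.length_eq; simp at this
    | cons h t =>
      have hh_mem : h ∈ List.range' lo (s+1) := hperm.subset (by simp)
      rw [List.mem_range'_1] at hh_mem
      rcases eq_or_lt_of_le hh_mem.1 with hcase | hlt
      · -- lo = h
        have hp' : t.Perm (List.range' (lo+1) s) := by
          rw [List.range'_succ] at hperm
          rw [← hcase] at hperm
          exact hperm.cons_inv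
        have havt : Av3 t := av3_sublist (List.sublist_cons_self h t) hav
        simp only [famF, Finset.mem_union, Finset.mem_image]
        exact Or.inl ⟨t, ih (lo+1) t hp' havt, by rw [hcase]⟩
      · -- lo < h
        have hnodW : (h :: t).Nodup := (hperm.nodup_iff).mpr (List.nodup_range')
        have hht : h ∉ t := (List.nodup_cons.mp hnodW).1
        have hndt : t.Nodup := (List.nodup_cons.mp hnodW).2
        set p : ℕ → Bool := fun x => decide (x < h) with hp_def
        set A := t.takeWhile p with hA_def
        set B := t.dropWhile p with hB_def
        have htAB : A ++ B = t := List.takeWhile_append_dropWhile (p := p) (l := t)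
        have fA : ∀ x ∈ A, x < h := by
          intro x hx; have := List.mem_takeWhile_imp hx; simpa [hp_def] using this
        have hBsub : B <+ t := by rw [← htAB]; exact List.sublist_append_right A B
        have hAsub : A <+ t := by rw [← htAB]; exact List.sublist_append_left A B
        have fB : ∀ b ∈ B, h < b := by
          intro b hb
          have hbt : b ∈ t := hBsub.subset hb
          by_contra hbh
          have hb_lt : b < h := by
            have : b ≠ h := fun he => hht (he ▸ hbt)
            omega
          cases hBc : B with
          | nil => rw [hBc] at hb; simp at hb
          | cons b0 B' =>
            have hb0 : p b0 = false := dropWhile_head_false p t (hB_def.symm.trans hBc)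
            have hb0h : ¬ (b0 < h) := by simpa [hp_def] using hb0
            have hb0t : b0 ∈ t := hBsub.subset (hBc ▸ List.mem_cons_self (a := b0) (l := B'))
            have hb0h' : h < b0 := by
              have : b0 ≠ h := fun he => hht (he ▸ hb0t)
              omega
            rcases List.mem_cons.mp (hBc ▸ hb : b ∈ b0 :: B') with rfl | hbB'
            · omega
            · have hsubB : [b0, b] <+ B := by
                rw [hBc]; exact (List.singleton_sublist.mpr hbB').cons₂ b0
              have hsubT : [h, b0, b] <+ h :: t := by
                refine List.Sublist.cons₂ h ?_
                rw [← htAB]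
                exact hsubB.trans (List.sublist_append_right A B)
              exact hav.1 ⟨h, b0, b, hsubT, hb_lt, hb0h'⟩
        have ha1 : 1 ≤ h - lo := by omega
        set a := h - lo with ha_def
        set r := lo + s - h with hr_def
        have hsplit : List.range' lo (s+1) = List.range' lo a ++ (h :: List.range' (h+1) r) := by
          have h1 := List.range'_append (s := lo) (m := a) (n := r+1) (step := 1)
          have h2 : lo + 1 * a = h := by omega
          have h3 : a + (r+1) = s+1 := by omega
          rw [h2, h3] at h1
          rw [← h1, List.range'_succ]
        have hmid : List.range' lo (s+1) ~ h :: (List.range' lo a ++ List.range' (h+1) r) := by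
          rw [hsplit]; exact List.perm_middle
        have hperm' : t ~ List.range' lo a ++ List.range' (h+1) r :=
          (hperm.trans hmid).cons_inv
        have hR1small : ∀ x ∈ List.range' lo a, x < h := by
          intro x hx; rw [List.mem_range'_1] at hx; omega
        have hR2big : ∀ x ∈ List.range' (h+1) r, h < x := by
          intro x hx; rw [List.mem_range'_1] at hx; omega
        have hAperm : A ~ List.range' lo a := by
          have e1 : t.filter p = A := by
            rw [← htAB, List.filter_append,
              List.filter_eq_self.mpr (fun u hu => by simpa [hp_def] using fA u hu),
              List.filter_eq_nil_iff.mpr (fun u hu => by have := fB u hu; simp [hp_def]; omega),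
              List.append_nil]
          have e2 : (List.range' lo a ++ List.range' (h+1) r).filter p = List.range' lo a := by
            rw [List.filter_append,
              List.filter_eq_self.mpr (fun u hu => by simpa [hp_def] using hR1small u hu),
              List.filter_eq_nil_iff.mpr (fun u hu => by have := hR2big u hu; simp [hp_def]; omega),
              List.append_nil]
          rw [← e1, ← e2]
          exact hperm'.filter p
        have hBperm : B ~ List.range' (h+1) r := by
          have e1 : t.filter (fun x => decide (h < x)) = B := by
            rw [← htAB, List.filter_append,
              List.filter_eq_nil_iff.mpr (fun u hu => by have := fA u hu; simp; omega),
              List.filter_eq_self.mpr (fun u hu => by have := fB u hu; simp; omega),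
              List.nil_append]
          have e2 : (List.range' lo a ++ List.range' (h+1) r).filter (fun x => decide (h < x))
              = List.range' (h+1) r := by
            rw [List.filter_append,
              List.filter_eq_nil_iff.mpr (fun u hu => by have := hR1small u hu; simp; omega),
              List.filter_eq_self.mpr (fun u hu => by have := hR2big u hu; simp; omega),
              List.nil_append]
          rw [← e1, ← e2]
          exact hperm'.filter _
        have hBnd : B.Nodup := List.Nodup.sublist hBsub hndt
        have hBdesc : B.Pairwise (fun x y => y < x) := by
          rw [List.pairwise_iff_forall_sublist]
          intro u v huv
          have hu : h < u := fB u (huv.subset (by simp))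
          have hv : h < v := fB v (huv.subset (by simp))
          have hne : u ≠ v := List.pairwise_iff_forall_sublist.mp hBnd huv
          by_contra hvu
          have huv' : u < v := by omega
          have hloA : lo ∈ A := hAperm.mem_iff.mpr (by rw [List.mem_range'_1]; omega)
          have hsub4 : [h, lo, u, v] <+ h :: t := by
            refine List.Sublist.cons₂ h ?_
            rw [← htAB]
            exact ((List.singleton_sublist.mpr hloA).append huv : [lo] ++ [u,v] <+ A ++ B)
          exact hav.2.1 ⟨h, lo, u, v, hsub4, hlt, hu, huv'⟩
        have hA213 : Av213 A := by
          rintro ⟨x,y,z,hs,h1,h2⟩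
          have hzh : z < h := fA z (hs.subset (by simp))
          have hsub4 : [h,x,y,z] <+ h :: t := List.Sublist.cons₂ h (hs.trans hAsub)
          exact hav.2.2 ⟨h,x,y,z, hsub4, h1, h2, hzh⟩
        have hA231 : Av231 A :=
          av231_sublist (hAsub.trans (List.sublist_cons_self h t)) hav.1
        have hApermA : A ~ List.range' lo ((a-1)+1) := by
          have he : (a-1)+1 = a := by omega
          rw [he]; exact hAperm
        obtain ⟨bs, hbslen, hAmm⟩ := mm_complete (a-1) lo A hApermA hA213 hA231
        have hBdsc : B = dsc (h+1) r := by
          refine List.Perm.eq_of_pairwise' (r := fun x y => x ≥ y) ?_ ?_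
            (hBperm.trans (List.reverse_perm _).symm)
          · exact List.Pairwise.imp (fun hxy => le_of_lt hxy) hBdesc
          · exact List.Pairwise.imp (fun hxy => le_of_lt hxy) (dsc_pairwise _ _)
        simp only [famF, Finset.mem_union, Finset.mem_image]
        refine Or.inr ⟨bs, (mem_blt s bs).mpr (by omega), ?_⟩
        rw [kword]
        have hk1 : lo + bs.length + 1 = h := by omega
        have hk2 : lo + bs.length + 2 = h + 1 := by omega
        have hk3 : s - bs.length - 1 = r := by omega
        rw [hk1, hk2, hk3, ← hAmm, ← hBdsc, htAB]
lemma cons_inj_nat (a : ℕ) : Function.Injective (a :: · : List ℕ → List ℕ) := by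
  intro x y hxy; injection hxy

lemma card_famF (s : ℕ) : ∀ lo, (famF lo s).card = 2^s - s := by
  induction s with
  | zero => intro lo; simp [famF]
  | succ s ih =>
    intro lo
    have hdisj : Disjoint ((famF (lo+1) s).image (lo :: ·)) ((blt s).image (kword lo s)) := by
      rw [Finset.disjoint_left]
      intro w hw1 hw2
      simp only [Finset.mem_image] at hw1 hw2
      obtain ⟨w', -, h1⟩ := hw1
      obtain ⟨bs, -, h2⟩ := hw2
      rw [← h1, kword] at h2
      have : lo + bs.length + 1 = lo := by injection h2
      omega
    have hckw : Set.InjOn (kword lo s) ↑(blt s) := by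
      intro bs1 _ bs2 _ heq
      rw [kword, kword] at heq
      have hhead : lo + bs1.length + 1 = lo + bs2.length + 1 := by injection heq
      have hlen : bs1.length = bs2.length := by omega
      have htail : mm lo bs1 ++ dsc (lo + bs1.length + 2) (s - bs1.length - 1)
          = mm lo bs2 ++ dsc (lo + bs2.length + 2) (s - bs2.length - 1) := by
        injection heq
      obtain ⟨hmm', -⟩ := List.append_inj htail (by rw [mm_length, mm_length, hlen])
      exact mm_inj bs1 bs2 lo hlen hmm'
    have hunfold : famF lo (s+1) = (famF (lo+1) s).image (lo :: ·) ∪ (blt s).image (kword lo s) := rfl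
    rw [hunfold, Finset.card_union_of_disjoint hdisj,
      Finset.card_image_of_injective _ (cons_inj_nat lo),
      Finset.card_image_of_injOn hckw, ih (lo+1), card_blt]
    have h1 : s < 2^s := Nat.lt_two_pow_self
    have h2 : 2^(s+1) = 2 * 2^s := by rw [pow_succ]; ring
    omega

end Avoid1342

open Avoid1342 List

/-- For `n ≥ 2`, the number of circular permutations of `[n]` avoiding the
circular pattern `[1342]` is `2^(n-1) - (n-1)`. -/
theorem avoid_1342_count (n : ℕ) (hn : 2 ≤ n) :
    {l : List ℕ | IsCirc n l ∧ ¬ CContains l [1, 3, 4, 2]}.ncard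
      = 2 ^ (n - 1) - (n - 1) := by
  obtain ⟨m, rfl⟩ : ∃ m, n = m + 2 := ⟨n - 2, by omega⟩
  have hrange : List.range' 1 (m+2) = 1 :: List.range' 2 (m+1) := by
    have e : m + 2 = (m+1) + 1 := by omega
    rw [e, List.range'_succ]
  have hset : {l : List ℕ | IsCirc (m+2) l ∧ ¬ CContains l [1,3,4,2]}
      = ↑((famF 2 (m+1)).image (1 :: ·)) := by
    ext l
    simp only [Set.mem_setOf_eq, Finset.coe_image, Set.mem_image, Finset.mem_coe]
    constructor
    · rintro ⟨⟨hperm, hhead⟩, hcc⟩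
      cases l with
      | nil => simp at hhead
      | cons h0 t =>
        have h01 : h0 = 1 := by simpa using hhead
        subst h01
        have ht_perm : t.Perm (List.range' 2 (m+1)) := by
          rw [hrange] at hperm; exact hperm.cons_inv
        have hgt : ∀ x ∈ t, 1 < x := fun x hx => by
          have := ht_perm.subset hx; rw [List.mem_range'_1] at this; omega
        have hav : Av3 (1 :: t) := by
          by_contra hnav
          exact hcc (cc_of_not_av3 hgt hnav)
        have havt : Av3 t := av3_sublist (List.sublist_cons_self 1 t) hav
        exact ⟨t, complete (m+1) 2 t ht_perm havt, rfl⟩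
    · rintro ⟨t, ht, rfl⟩
      obtain ⟨hperm, hav⟩ := sound (m+1) 2 t ht
      have hgt : ∀ x ∈ t, 1 < x := fun x hx => by
        have := hperm.subset hx; rw [List.mem_range'_1] at this; omega
      refine ⟨⟨?_, rfl⟩, ?_⟩
      · rw [hrange]; exact hperm.cons 1
      · intro hcc
        have hne : (1 :: t) ≠ [] := by simp
        exact (not_av3_of_cc hne hcc) (av3_cons_min hgt hav)
  rw [hset, Set.ncard_coe_finset, Finset.card_image_of_injective _ (cons_inj_nat 1),
    card_famF (m+1) 2]
  have e : m + 2 - 1 = m + 1 := by omega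
  rw [e]
end

section
/- For k ≥ 1 and n ≥ k, the number of permutations of [n+1] avoiding all three patterns 213, 231, and the increasing pattern 12⋯(k+1) equals the sum over i from 0 to k-1 of binomial(n, i). -/
def build (lo : ℕ) : List Bool → List ℕ
  | [] => [lo]
  | true :: cs => lo :: build (lo+1) cs
  | false :: cs => (lo + cs.length + 1) :: build lo cs

lemma build_perm (c : List Bool) : ∀ lo, (build lo c).Perm (List.range' lo (c.length + 1)) := by
  induction c with
  | nil => intro lo; simp [build]
  | cons b cs ih =>
    intro lo
    simp only [List.length_cons]
    cases b with
    | true =>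
      rw [build, List.range'_succ]
      exact (ih (lo+1)).cons lo
    | false =>
      rw [build, List.range'_1_concat]
      refine ((ih lo).cons _).trans ?_
      rw [show lo + cs.length + 1 = lo + (cs.length + 1) by omega]
      exact (List.perm_append_singleton _ _).symm

lemma build_length (c : List Bool) (lo : ℕ) : (build lo c).length = c.length + 1 :=
  (build_perm c lo).length_eq.trans (by simp)

lemma mem_build {c : List Bool} {lo y : ℕ} (h : y ∈ build lo c) : lo ≤ y ∧ y ≤ lo + c.length := by
  have := (build_perm c lo).mem_iff.mp h
  rw [List.mem_range'_1] at this
  omega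

lemma build_split : ∀ (c : List Bool) (lo : ℕ) (r₁ r₂ : List ℕ) (x : ℕ),
    build lo c = r₁ ++ r₂ → x ∈ r₁ →
    (∀ y ∈ r₂, x < y) ∨ (∀ y ∈ r₂, y < x) := by
  intro c
  induction c with
  | nil =>
    intro lo r₁ r₂ x he hx
    match r₁, hx with
    | h :: t, hx =>
      simp only [build, List.cons_append, List.cons.injEq] at he
      have : t ++ r₂ = ([] : List ℕ) := he.2.symm
      have hr2 : r₂ = [] := by
        rcases List.append_eq_nil_iff.mp this with ⟨_, h2⟩; exact h2
      subst hr2; left; simp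
  | cons b cs ih =>
    intro lo r₁ r₂ x he hx
    match r₁, hx with
    | h :: t, hx =>
      cases b with
      | true =>
        simp only [build, List.cons_append, List.cons.injEq] at he
        obtain ⟨rfl, he2⟩ := he
        cases hx with
        | head =>
          left; intro y hy
          have : y ∈ build (lo+1) cs := by rw [he2]; exact List.mem_append_right _ hy
          have := mem_build this; omega
        | tail _ hx => exact ih (lo+1) t r₂ x he2 hx
      | false =>
        simp only [build, List.cons_append, List.cons.injEq] at he
        obtain ⟨rfl, he2⟩ := he
        cases hx with
        | head =>
          right; intro y hy
          have : y ∈ build lo cs := by rw [he2]; exact List.mem_append_right _ hy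
          have := mem_build this; omega
        | tail _ hx => exact ih lo t r₂ x he2 hx

lemma iso_three {t : List ℕ} {p0 p1 p2 : ℕ} (h : IsoTo t [p0, p1, p2]) :
    ∃ a b c, t = [a, b, c] := by
  obtain ⟨hl, _⟩ := h
  match t, hl with
  | [a, b, c], _ => exact ⟨a, b, c, rfl⟩

lemma no_mid (c : List Bool) (lo : ℕ) {a b d : ℕ} (h : [a, b, d].Sublist (build lo c))
    (h1 : b < a) (h2 : a < d) : False := by
  rw [List.cons_sublist_iff] at h
  obtain ⟨r₁, r₂, he, ha, hbd⟩ := h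
  have hb : b ∈ r₂ := hbd.subset (by simp)
  have hd : d ∈ r₂ := hbd.subset (by simp)
  rcases build_split c lo r₁ r₂ a he ha with H | H
  · exact absurd (H b hb) (by omega)
  · exact absurd (H d hd) (by omega)

lemma build_avoid_213 (c : List Bool) (lo : ℕ) : ¬ LContains (build lo c) [2, 1, 3] := by
  rintro ⟨t, hsub, hiso⟩
  obtain ⟨a, b, d, rfl⟩ := iso_three hiso
  have h1 : b < a := by
    have := (hiso.2 1 0 (by simp) (by simp)).mpr (by simp)
    simpa using this
  have h2 : a < d := by
    have := (hiso.2 0 2 (by simp) (by simp)).mpr (by simp)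
    simpa using this
  exact no_mid c lo hsub h1 h2

lemma build_avoid_231 (c : List Bool) (lo : ℕ) : ¬ LContains (build lo c) [2, 3, 1] := by
  rintro ⟨t, hsub, hiso⟩
  obtain ⟨a, b, d, rfl⟩ := iso_three hiso
  have h1 : d < a := by
    have := (hiso.2 2 0 (by simp) (by simp)).mpr (by simp)
    simpa using this
  have h2 : a < b := by
    have := (hiso.2 0 1 (by simp) (by simp)).mpr (by simp)
    simpa using this
  rw [List.cons_sublist_iff] at hsub
  obtain ⟨r₁, r₂, he, ha, hbd⟩ := hsub
  have hb : b ∈ r₂ := hbd.subset (by simp)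
  have hd : d ∈ r₂ := hbd.subset (by simp)
  rcases build_split c lo r₁ r₂ a he ha with H | H
  · exact absurd (H d hd) (by omega)
  · exact absurd (H b hb) (by omega)

lemma lcontains_iota_iff {l : List ℕ} {m : ℕ} :
    LContains l (List.range' 1 m) ↔
      ∃ t : List ℕ, t.Sublist l ∧ t.Pairwise (· < ·) ∧ t.length = m := by
  constructor
  · rintro ⟨t, hsub, hlen, hcmp⟩
    have hlm : t.length = m := by simpa using hlen
    refine ⟨t, hsub, ?_, hlm⟩
    rw [List.pairwise_iff_getElem]
    intro i j hi hj hij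
    have := (hcmp i j hi hj).mpr ?_
    · rwa [List.getD_eq_getElem _ _ hi, List.getD_eq_getElem _ _ hj] at this
    · rw [List.getD_eq_getElem _ _ (by simpa [hlm] using hi),
        List.getD_eq_getElem _ _ (by simpa [hlm] using hj)]
      simp [List.getElem_range'_1]
      omega
  · rintro ⟨t, hsub, hsort, hlen⟩
    refine ⟨t, hsub, by simpa using hlen, ?_⟩
    intro i j hi hj
    rw [List.getD_eq_getElem _ _ hi, List.getD_eq_getElem _ _ hj,
      List.getD_eq_getElem _ _ (by simpa [← hlen] using hi),
      List.getD_eq_getElem _ _ (by simpa [← hlen] using hj)]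
    simp only [List.getElem_range'_1]
    rw [List.pairwise_iff_getElem] at hsort
    constructor
    · intro hlt
      by_contra hc
      push_neg at hc
      rcases Nat.lt_or_ge j i with hji | hji
      · exact absurd (hsort j i hj hi hji) (by omega)
      · have : i = j := by omega
        subst this; omega
    · intro hlt
      exact hsort i j hi hj (by omega)

lemma sorted_sublist_bound : ∀ (c : List Bool) (lo : ℕ) (t : List ℕ),
    t.Sublist (build lo c) → t.Pairwise (· < ·) → t.length ≤ c.count true + 1 := by
  intro c
  induction c with
  | nil =>
    intro lo t hs _
    have := hs.length_le
    simp [build] at this ⊢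
    omega
  | cons b cs ih =>
    intro lo t hs hsort
    cases b with
    | true =>
      rw [build, List.sublist_cons_iff] at hs
      rcases hs with hs | ⟨r, rfl, hr⟩
      · have := ih (lo+1) t hs hsort
        simp [List.count_cons]
        omega
      · have := ih (lo+1) r hr (List.Pairwise.of_cons hsort)
        simp [List.count_cons]
        omega
    | false =>
      rw [build, List.sublist_cons_iff] at hs
      rcases hs with hs | ⟨r, rfl, hr⟩
      · have := ih lo t hs hsort
        simp [List.count_cons]
        omega
      · have hrnil : r = [] := by
          by_contra hne
          obtain ⟨y, hy⟩ := List.exists_mem_of_ne_nil r hne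
          have h1 : lo + cs.length + 1 < y := (List.pairwise_cons.mp hsort).1 y hy
          have h2 := mem_build (hr.subset hy)
          omega
        subst hrnil
        simp [List.count_cons]
    
lemma exists_sorted_sublist : ∀ (c : List Bool) (lo : ℕ),
    ∃ t : List ℕ, t.Sublist (build lo c) ∧ t.Pairwise (· < ·) ∧
      t.length = c.count true + 1 := by
  intro c
  induction c with
  | nil => intro lo; exact ⟨[lo], List.Sublist.refl _, by simp, by simp⟩
  | cons b cs ih =>
    intro lo
    cases b with
    | true =>
      obtain ⟨t, hsub, hsort, hlen⟩ := ih (lo+1)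
      refine ⟨lo :: t, hsub.cons₂ lo, ?_, by simp [hlen, List.count_cons]⟩
      rw [List.pairwise_cons]
      exact ⟨fun y hy => by have := mem_build (hsub.subset hy); omega, hsort⟩
    | false =>
      obtain ⟨t, hsub, hsort, hlen⟩ := ih lo
      exact ⟨t, hsub.cons _, hsort, by simp [hlen, List.count_cons]⟩

lemma LContains.of_sublist {l l' p : List ℕ} (h : l.Sublist l') (hc : LContains l p) :
    LContains l' p := by
  obtain ⟨t, hs, hi⟩ := hc
  exact ⟨t, hs.trans h, hi⟩

lemma pair_sublist {t : List ℕ} {a b : ℕ} (ha : a ∈ t) (hb : b ∈ t) (hne : a ≠ b) :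
    [a, b].Sublist t ∨ [b, a].Sublist t := by
  induction t with
  | nil => simp at ha
  | cons x t ih =>
    rcases List.mem_cons.mp ha with rfl | ha'
    · left
      refine List.Sublist.cons₂ _ (List.singleton_sublist.mpr ?_)
      rcases List.mem_cons.mp hb with rfl | hb'
      · exact absurd rfl hne
      · exact hb'
    · rcases List.mem_cons.mp hb with rfl | hb'
      · right
        exact List.Sublist.cons₂ _ (List.singleton_sublist.mpr ha')
      · rcases ih ha' hb' with h | h
        · exact Or.inl (h.cons _)
        · exact Or.inr (h.cons _)

lemma iso_213_of {x y z : ℕ} (h1 : y < x) (h2 : x < z) : IsoTo [x, y, z] [2, 1, 3] := by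
  refine ⟨rfl, ?_⟩
  intro i j hi hj
  simp only [List.length_cons, List.length_nil] at hi hj
  interval_cases i <;> interval_cases j <;> simp <;> omega

lemma iso_231_of {x y z : ℕ} (h1 : x < y) (h2 : z < x) : IsoTo [x, y, z] [2, 3, 1] := by
  refine ⟨rfl, ?_⟩
  intro i j hi hj
  simp only [List.length_cons, List.length_nil] at hi hj
  interval_cases i <;> interval_cases j <;> simp <;> omega

lemma struct : ∀ (m : ℕ) (l : List ℕ) (lo : ℕ),
    l.Perm (List.range' lo (m + 1)) → ¬ LContains l [2, 1, 3] → ¬ LContains l [2, 3, 1] →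
    ∃ c : List Bool, c.length = m ∧ l = build lo c := by
  intro m
  induction m with
  | zero =>
    intro l lo hp _ _
    refine ⟨[], rfl, ?_⟩
    simpa [build] using List.perm_singleton.mp (by simpa using hp)
  | succ m ih =>
    intro l lo hp h213 h231
    obtain ⟨h, t, rfl⟩ : ∃ h t, l = h :: t := by
      cases l with
      | nil => exact absurd hp.length_eq (by simp)
      | cons h t => exact ⟨h, t, rfl⟩
    have hmem : ∀ x ∈ h :: t, lo ≤ x ∧ x ≤ lo + m + 1 := by
      intro x hx
      have := List.mem_range'_1.mp (hp.mem_iff.mp hx)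
      omega
    have hkey : h = lo ∨ h = lo + m + 1 := by
      by_contra hc
      push_neg at hc
      have hh := hmem h (by simp)
      have hlo_mem : lo ∈ t := by
        have : lo ∈ h :: t := hp.mem_iff.mpr (List.mem_range'_1.mpr (by omega))
        rcases List.mem_cons.mp this with h' | h'
        · exact absurd h'.symm hc.1
        · exact h'
      have htop_mem : lo + m + 1 ∈ t := by
        have : lo + m + 1 ∈ h :: t := hp.mem_iff.mpr (List.mem_range'_1.mpr (by omega))
        rcases List.mem_cons.mp this with h' | h'
        · exact absurd h'.symm hc.2
        · exact h'
      have hlt : lo < h := by omega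
      have hgt : h < lo + m + 1 := by omega
      rcases pair_sublist hlo_mem htop_mem (by omega) with hs | hs
      · exact h213 ⟨[h, lo, lo + m + 1], hs.cons₂ h, iso_213_of hlt hgt⟩
      · exact h231 ⟨[h, lo + m + 1, lo], hs.cons₂ h, iso_231_of hgt hlt⟩
    have h213t : ¬ LContains t [2, 1, 3] := fun hc => h213 (hc.of_sublist (List.sublist_cons_self h t))
    have h231t : ¬ LContains t [2, 3, 1] := fun hc => h231 (hc.of_sublist (List.sublist_cons_self h t))
    rcases hkey with h1 | h1
    · subst h1
      have hpt : t.Perm (List.range' (h + 1) (m + 1)) := by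
        have : (h :: t).Perm (h :: List.range' (h + 1) (m + 1)) := by
          rw [← List.range'_succ]
          exact hp
        exact this.cons_inv
      obtain ⟨c, hcl, rfl⟩ := ih t (h + 1) hpt h213t h231t
      exact ⟨true :: c, by simp [hcl], rfl⟩
    · subst h1
      have hpt : t.Perm (List.range' lo (m + 1)) := by
        have h1 : ((lo + m + 1) :: t).Perm ((lo + m + 1) :: List.range' lo (m + 1)) := by
          refine hp.trans ?_
          rw [List.range'_1_concat, show lo + (m + 1) = lo + m + 1 by omega]
          exact List.perm_append_singleton _ _
        exact h1.cons_inv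
      obtain ⟨c, hcl, rfl⟩ := ih t lo hpt h213t h231t
      exact ⟨false :: c, by simp [hcl], by simp [build, hcl]⟩

lemma build_inj : ∀ (c c' : List Bool) (lo : ℕ), c.length = c'.length →
    build lo c = build lo c' → c = c' := by
  intro c
  induction c with
  | nil => intro c' lo hl _; cases c' with
    | nil => rfl
    | cons b cs => simp at hl
  | cons b cs ih =>
    intro c' lo hl he
    cases c' with
    | nil => simp at hl
    | cons b' cs' =>
      simp only [List.length_cons, Nat.add_right_cancel_iff] at hl
      cases b <;> cases b' <;> simp only [build, List.cons.injEq] at he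
      · rw [ih cs' lo hl he.2]
      · exact absurd he.1 (by omega)
      · exact absurd he.1 (by omega)
      · rw [ih cs' (lo+1) hl he.2]

def enc (n : ℕ) (s : Finset (Fin n)) : List Bool :=
  (List.finRange n).map (fun i => decide (i ∈ s))

lemma enc_length (n : ℕ) (s : Finset (Fin n)) : (enc n s).length = n := by
  simp [enc]

lemma count_enc (n : ℕ) (s : Finset (Fin n)) : (enc n s).count true = s.card := by
  have h1 : (enc n s).count true
      = ((List.finRange n).filter (fun i => decide (i ∈ s))).length := by
    rw [enc, List.count_eq_countP, List.countP_map, List.countP_eq_length_filter]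
    congr 1
    apply List.filter_congr
    intro i _
    simp
  have hnd : ((List.finRange n).filter (fun i => decide (i ∈ s))).Nodup :=
    (List.nodup_finRange n).filter _
  have h2 : ((List.finRange n).filter (fun i => decide (i ∈ s))).toFinset = s := by
    ext x
    simp [List.mem_filter]
  rw [h1, ← List.toFinset_card_of_nodup hnd, h2]

lemma enc_inj (n : ℕ) : Function.Injective (enc n) := by
  intro s s' h
  ext i
  have : (enc n s).getD i.val false = (enc n s').getD i.val false := by rw [h]
  simp only [enc] at this
  rw [List.getD_eq_getElem _ _ (by simp [i.isLt]), List.getD_eq_getElem _ _ (by simp [i.isLt])] at this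
  simp only [List.getElem_map, List.getElem_finRange] at this
  simpa using this

lemma enc_surj (n : ℕ) (c : List Bool) (hc : c.length = n) : ∃ s, enc n s = c := by
  refine ⟨Finset.univ.filter (fun i => c.getD i.val false = true), ?_⟩
  apply List.ext_getElem (by simp [enc, hc])
  intro j h1 h2
  simp only [enc, List.getElem_map, List.getElem_finRange, Finset.mem_filter, Finset.mem_univ,
    true_and]
  rw [List.getD_eq_getElem _ _ (by simpa [enc, hc] using h2)]
  simp

/-- For `k ≥ 1` and `n ≥ k`, the number of permutations of `[n+1]` avoiding
`213`, `231`, and the increasing pattern `12⋯(k+1)` is `∑_{i=0}^{k-1} C(n,i)`. -/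
theorem avoid_213_231_iota_count (k n : ℕ) (hk : 1 ≤ k) (hn : k ≤ n) :
    {l : List ℕ | l.Perm (List.range' 1 (n + 1)) ∧ ¬ LContains l [2, 1, 3] ∧
      ¬ LContains l [2, 3, 1] ∧ ¬ LContains l (List.range' 1 (k + 1))}.ncard
      = ∑ i ∈ Finset.range k, n.choose i := by
  have hset : {l : List ℕ | l.Perm (List.range' 1 (n + 1)) ∧ ¬ LContains l [2, 1, 3] ∧
      ¬ LContains l [2, 3, 1] ∧ ¬ LContains l (List.range' 1 (k + 1))}
      = (fun s : Finset (Fin n) => build 1 (enc n s)) '' {s | s.card < k} := by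
    ext l
    simp only [Set.mem_setOf_eq, Set.mem_image]
    constructor
    · rintro ⟨hp, h213, h231, hiota⟩
      obtain ⟨c, hcl, rfl⟩ := struct n l 1 hp h213 h231
      have hcount : c.count true < k := by
        by_contra hge
        push_neg at hge
        obtain ⟨t, hsub, hsort, hlen⟩ := exists_sorted_sublist c 1
        refine hiota (lcontains_iota_iff.mpr ⟨t.take (k+1), (t.take_sublist _).trans hsub,
          hsort.sublist (t.take_sublist _), ?_⟩)
        rw [List.length_take, hlen]
        omega
      obtain ⟨s, rfl⟩ := enc_surj n c hcl
      refine ⟨s, ?_, rfl⟩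
      rwa [count_enc] at hcount
    · rintro ⟨s, hs, rfl⟩
      refine ⟨?_, build_avoid_213 _ _, build_avoid_231 _ _, ?_⟩
      · have := build_perm (enc n s) 1
        rwa [enc_length] at this
      · intro h
        obtain ⟨t, hsub, hsort, hlen⟩ := lcontains_iota_iff.mp h
        have := sorted_sublist_bound (enc n s) 1 t hsub hsort
        rw [hlen, count_enc] at this
        omega
  rw [hset]
  have hinj : Function.Injective (fun s : Finset (Fin n) => build 1 (enc n s)) := by
    intro s s' h
    exact enc_inj n (build_inj _ _ 1 (by rw [enc_length, enc_length]) h)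
  rw [Set.ncard_image_of_injective _ hinj]
  have hco : {s : Finset (Fin n) | s.card < k}
      = ↑(Finset.univ.filter (fun s : Finset (Fin n) => s.card < k)) := by
    ext s; simp
  rw [hco, Set.ncard_coe_finset]
  rw [Finset.card_eq_sum_card_fiberwise
    (f := Finset.card) (t := Finset.range k) (fun s hs => by
      simp only [Finset.mem_coe, Finset.mem_filter] at hs
      exact Finset.mem_range.mpr hs.2)]
  refine Finset.sum_congr rfl ?_
  intro i hi
  rw [Finset.mem_range] at hi
  have : (Finset.univ.filter (fun s : Finset (Fin n) => s.card < k)).filter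
      (fun s => s.card = i) = Finset.powersetCard i (Finset.univ : Finset (Fin n)) := by
    ext s
    simp only [Finset.mem_filter, Finset.mem_univ, true_and, Finset.mem_powersetCard,
      Finset.subset_univ]
    constructor
    · rintro ⟨_, h⟩; exact h
    · intro h; exact ⟨by omega, h⟩
  rw [this, Finset.card_powersetCard, Finset.card_univ, Fintype.card_fin]
end

section
/- For n ≥ 3, the number of circular permutations of [n] avoiding both [1342] and [1234] equals 2(n-2). -/
/-- rotation of iso -/
lemma IsoTo.rotate {t p : List ℕ} (h : IsoTo t p) (m : ℕ) :
    IsoTo (t.rotate m) (p.rotate m) := by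
  obtain ⟨hl, h⟩ := h
  constructor
  · simp [List.length_rotate, hl]
  · intro i j hi hj
    rw [List.length_rotate] at hi hj
    have hi' : i < (t.rotate m).length := by simpa using hi
    have hj' : j < (t.rotate m).length := by simpa using hj
    have hip : i < (p.rotate m).length := by simpa [hl] using hi
    have hjp : j < (p.rotate m).length := by simpa [hl] using hj
    rw [List.getD_eq_getElem _ _ hi', List.getD_eq_getElem _ _ hj',
      List.getD_eq_getElem _ _ hip, List.getD_eq_getElem _ _ hjp]
    have e1 := List.get_rotate t m ⟨i, hi'⟩
    have e2 := List.get_rotate t m ⟨j, hj'⟩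
    have e3 := List.get_rotate p m ⟨i, hip⟩
    have e4 := List.get_rotate p m ⟨j, hjp⟩
    simp only [List.get_eq_getElem] at e1 e2 e3 e4
    rw [e1, e2, e3, e4]
    have h1 : (i + m) % t.length < t.length := Nat.mod_lt _ (by omega)
    have h2 : (j + m) % t.length < t.length := Nat.mod_lt _ (by omega)
    have := h ((i+m) % t.length) ((j+m) % t.length) h1 h2
    rw [List.getD_eq_getElem _ _ h1, List.getD_eq_getElem _ _ h2,
      List.getD_eq_getElem _ _ (by omega : (i+m)%t.length < p.length),
      List.getD_eq_getElem _ _ (by omega : (j+m)%t.length < p.length)] at this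
    convert this using 2 <;> simp [hl]

lemma cContains_iff_rot (l π : List ℕ) :
    CContains l π ↔ ∃ j, LContains l (π.rotate j) := by
  constructor
  · rintro ⟨k, t, hsub, hiso⟩
    by_cases hl : l = []
    · subst hl
      simp [List.rotate_nil] at hsub
      exact ⟨0, t, by simp [hsub], by simpa [hsub, List.rotate_nil] using hiso⟩
    have hk : l.rotate k = l.drop (k % l.length) ++ l.take (k % l.length) := by
      rw [← List.rotate_mod]
      exact List.rotate_eq_drop_append_take (Nat.le_of_lt (Nat.mod_lt _ (by
        simpa [List.length_pos_iff] using hl)))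
    rw [hk] at hsub
    obtain ⟨t1, t2, rfl, h1, h2⟩ := List.sublist_append_iff.1 hsub
    refine ⟨t1.length, t2 ++ t1, ?_, ?_⟩
    · have : (t2 ++ t1).Sublist (l.take (k % l.length) ++ l.drop (k % l.length)) :=
        List.Sublist.append h2 h1
      rwa [List.take_append_drop] at this
    · have := hiso.rotate t1.length
      rwa [List.rotate_append_length_eq] at this
  · rintro ⟨j, t, hsub, hiso⟩
    have hlen : t.length = π.length := by
      have := hiso.1; simpa using this
    set m := t.length - j % t.length with hm
    have hsplit : t = t.take m ++ t.drop m := (List.take_append_drop _ _).symm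
    rw [hsplit] at hsub
    obtain ⟨u, v, rfl, h1, h2⟩ := List.append_sublist_iff.1 hsub
    refine ⟨u.length, t.drop m ++ t.take m, ?_, ?_⟩
    · have : (u ++ v).rotate u.length = v ++ u := List.rotate_append_length_eq u v
      rw [this]
      exact List.Sublist.append h2 h1
    · have h3 : t.drop m ++ t.take m = t.rotate m :=
        (List.rotate_eq_drop_append_take (by omega)).symm
      rw [h3]
      have := hiso.rotate m
      have hrr : (π.rotate j).rotate m = π.rotate (j + m) := List.rotate_rotate _ _ _
      rw [hrr] at this
      by_cases ht : t = []
      · subst ht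
        have hπ : π = [] := List.eq_nil_of_length_eq_zero (by simpa using hlen.symm)
        subst hπ; simpa using this
      · have htl : 0 < t.length := List.length_pos_iff.2 ht
        have hπl : 0 < π.length := by omega
        have : IsoTo (t.rotate m) (π.rotate ((j + m) % π.length)) := by
          rwa [List.rotate_mod]
        have hmod : (j + m) % π.length = 0 := by
          have hj : j % t.length < t.length := Nat.mod_lt _ htl
          have : (j + m) % π.length = (j % t.length + m) % π.length := by
            rw [← hlen]
            conv_lhs => rw [show j = t.length * (j / t.length) + j % t.length from
              (Nat.div_add_mod j t.length).symm ▸ rfl]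
            rw [Nat.add_assoc, Nat.mul_add_mod]
          rw [this, hm, ← hlen]
          have : j % t.length + (t.length - j % t.length) = t.length := by omega
          rw [this, Nat.mod_self]
        rwa [hmod, List.rotate_zero] at this

lemma isoTo4 (a b c d p0 p1 p2 p3 : ℕ) :
    IsoTo [a,b,c,d] [p0,p1,p2,p3] ↔
      ((a < b ↔ p0 < p1) ∧ (b < a ↔ p1 < p0) ∧ (a < c ↔ p0 < p2) ∧ (c < a ↔ p2 < p0) ∧
       (a < d ↔ p0 < p3) ∧ (d < a ↔ p3 < p0) ∧ (b < c ↔ p1 < p2) ∧ (c < b ↔ p2 < p1) ∧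
       (b < d ↔ p1 < p3) ∧ (d < b ↔ p3 < p1) ∧ (c < d ↔ p2 < p3) ∧ (d < c ↔ p3 < p2)) := by
  constructor
  · rintro ⟨-, h⟩
    refine ⟨?_, ?_, ?_, ?_, ?_, ?_, ?_, ?_, ?_, ?_, ?_, ?_⟩ <;>
      first
        | simpa using h 0 1 (by norm_num) (by norm_num)
        | simpa using h 1 0 (by norm_num) (by norm_num)
        | simpa using h 0 2 (by norm_num) (by norm_num)
        | simpa using h 2 0 (by norm_num) (by norm_num)
        | simpa using h 0 3 (by norm_num) (by norm_num)
        | simpa using h 3 0 (by norm_num) (by norm_num)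
        | simpa using h 1 2 (by norm_num) (by norm_num)
        | simpa using h 2 1 (by norm_num) (by norm_num)
        | simpa using h 1 3 (by norm_num) (by norm_num)
        | simpa using h 3 1 (by norm_num) (by norm_num)
        | simpa using h 2 3 (by norm_num) (by norm_num)
        | simpa using h 3 2 (by norm_num) (by norm_num)
  · rintro ⟨h1, h2, h3, h4, h5, h6, h7, h8, h9, h10, h11, h12⟩
    refine ⟨rfl, ?_⟩
    intro i j hi hj
    simp only [List.length_cons, List.length_nil] at hi hj
    interval_cases i <;> interval_cases j <;> simp_all

lemma lContains4 (l : List ℕ) (p0 p1 p2 p3 : ℕ) :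
    LContains l [p0,p1,p2,p3] ↔
      ∃ a b c d, [a,b,c,d].Sublist l ∧ IsoTo [a,b,c,d] [p0,p1,p2,p3] := by
  constructor
  · rintro ⟨t, hsub, hiso⟩
    have hlen : t.length = 4 := by simpa using hiso.1
    rcases t with _|⟨a,_|⟨b,_|⟨c,_|⟨d,_|t⟩⟩⟩⟩ <;> simp_all
    exact ⟨a, b, c, d, hsub, hiso⟩
  · rintro ⟨a, b, c, d, hsub, hiso⟩
    exact ⟨_, hsub, hiso⟩

def Bad (a b c d : ℕ) : Prop :=
  (a<b∧b<c∧c<d) ∨ (d<a∧a<b∧b<c) ∨ (c<d∧d<a∧a<b) ∨ (b<c∧c<d∧d<a) ∨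
  (a<d∧d<b∧b<c) ∨ (d<c∧c<a∧a<b) ∨ (c<b∧b<d∧d<a) ∨ (b<a∧a<c∧c<d)

lemma cc_rot4 (l π : List ℕ) (h4 : π.length = 4) :
    CContains l π ↔ (LContains l (π.rotate 0) ∨ LContains l (π.rotate 1) ∨
      LContains l (π.rotate 2) ∨ LContains l (π.rotate 3)) := by
  rw [cContains_iff_rot]
  constructor
  · rintro ⟨j, hj⟩
    have : π.rotate j = π.rotate (j % 4) := by rw [← h4, List.rotate_mod]
    rw [this] at hj
    have h4' : j % 4 < 4 := Nat.mod_lt _ (by norm_num)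
    interval_cases h : j % 4 <;> simp_all
  · rintro (h | h | h | h) <;> exact ⟨_, h⟩


lemma LCp1 (l : List ℕ) : LContains l [1,2,3,4] ↔
    ∃ a b c d, [a,b,c,d].Sublist l ∧ (a<b ∧ b<c ∧ c<d) := by
  rw [lContains4]
  constructor
  · rintro ⟨a,b,c,d,hsub,hi⟩
    rw [isoTo4] at hi
    exact ⟨a,b,c,d,hsub, by omega⟩
  · rintro ⟨a,b,c,d,hsub,hi⟩
    exact ⟨a,b,c,d,hsub, by rw [isoTo4]; omega⟩


lemma LCp2 (l : List ℕ) : LContains l [2,3,4,1] ↔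
    ∃ a b c d, [a,b,c,d].Sublist l ∧ (d<a ∧ a<b ∧ b<c) := by
  rw [lContains4]
  constructor
  · rintro ⟨a,b,c,d,hsub,hi⟩
    rw [isoTo4] at hi
    exact ⟨a,b,c,d,hsub, by omega⟩
  · rintro ⟨a,b,c,d,hsub,hi⟩
    exact ⟨a,b,c,d,hsub, by rw [isoTo4]; omega⟩


lemma LCp3 (l : List ℕ) : LContains l [3,4,1,2] ↔
    ∃ a b c d, [a,b,c,d].Sublist l ∧ (c<d ∧ d<a ∧ a<b) := by
  rw [lContains4]
  constructor
  · rintro ⟨a,b,c,d,hsub,hi⟩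
    rw [isoTo4] at hi
    exact ⟨a,b,c,d,hsub, by omega⟩
  · rintro ⟨a,b,c,d,hsub,hi⟩
    exact ⟨a,b,c,d,hsub, by rw [isoTo4]; omega⟩


lemma LCp4 (l : List ℕ) : LContains l [4,1,2,3] ↔
    ∃ a b c d, [a,b,c,d].Sublist l ∧ (b<c ∧ c<d ∧ d<a) := by
  rw [lContains4]
  constructor
  · rintro ⟨a,b,c,d,hsub,hi⟩
    rw [isoTo4] at hi
    exact ⟨a,b,c,d,hsub, by omega⟩
  · rintro ⟨a,b,c,d,hsub,hi⟩
    exact ⟨a,b,c,d,hsub, by rw [isoTo4]; omega⟩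


lemma LCp5 (l : List ℕ) : LContains l [1,3,4,2] ↔
    ∃ a b c d, [a,b,c,d].Sublist l ∧ (a<d ∧ d<b ∧ b<c) := by
  rw [lContains4]
  constructor
  · rintro ⟨a,b,c,d,hsub,hi⟩
    rw [isoTo4] at hi
    exact ⟨a,b,c,d,hsub, by omega⟩
  · rintro ⟨a,b,c,d,hsub,hi⟩
    exact ⟨a,b,c,d,hsub, by rw [isoTo4]; omega⟩


lemma LCp6 (l : List ℕ) : LContains l [3,4,2,1] ↔
    ∃ a b c d, [a,b,c,d].Sublist l ∧ (d<c ∧ c<a ∧ a<b) := by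
  rw [lContains4]
  constructor
  · rintro ⟨a,b,c,d,hsub,hi⟩
    rw [isoTo4] at hi
    exact ⟨a,b,c,d,hsub, by omega⟩
  · rintro ⟨a,b,c,d,hsub,hi⟩
    exact ⟨a,b,c,d,hsub, by rw [isoTo4]; omega⟩


lemma LCp7 (l : List ℕ) : LContains l [4,2,1,3] ↔
    ∃ a b c d, [a,b,c,d].Sublist l ∧ (c<b ∧ b<d ∧ d<a) := by
  rw [lContains4]
  constructor
  · rintro ⟨a,b,c,d,hsub,hi⟩
    rw [isoTo4] at hi
    exact ⟨a,b,c,d,hsub, by omega⟩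
  · rintro ⟨a,b,c,d,hsub,hi⟩
    exact ⟨a,b,c,d,hsub, by rw [isoTo4]; omega⟩


lemma LCp8 (l : List ℕ) : LContains l [2,1,3,4] ↔
    ∃ a b c d, [a,b,c,d].Sublist l ∧ (b<a ∧ a<c ∧ c<d) := by
  rw [lContains4]
  constructor
  · rintro ⟨a,b,c,d,hsub,hi⟩
    rw [isoTo4] at hi
    exact ⟨a,b,c,d,hsub, by omega⟩
  · rintro ⟨a,b,c,d,hsub,hi⟩
    exact ⟨a,b,c,d,hsub, by rw [isoTo4]; omega⟩


lemma avoid_iff (l : List ℕ) :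
    (¬ CContains l [1, 3, 4, 2] ∧ ¬ CContains l [1, 2, 3, 4]) ↔
      ∀ a b c d, [a,b,c,d].Sublist l → ¬ Bad a b c d := by
  rw [cc_rot4 l [1,3,4,2] (by decide), cc_rot4 l [1,2,3,4] (by decide),
    show ([1,3,4,2] : List ℕ).rotate 0 = [1,3,4,2] by decide,
    show ([1,3,4,2] : List ℕ).rotate 1 = [3,4,2,1] by decide,
    show ([1,3,4,2] : List ℕ).rotate 2 = [4,2,1,3] by decide,
    show ([1,3,4,2] : List ℕ).rotate 3 = [2,1,3,4] by decide,
    show ([1,2,3,4] : List ℕ).rotate 0 = [1,2,3,4] by decide,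
    show ([1,2,3,4] : List ℕ).rotate 1 = [2,3,4,1] by decide,
    show ([1,2,3,4] : List ℕ).rotate 2 = [3,4,1,2] by decide,
    show ([1,2,3,4] : List ℕ).rotate 3 = [4,1,2,3] by decide,
    LCp5, LCp6, LCp7, LCp8, LCp1, LCp2, LCp3, LCp4]
  constructor
  · rintro ⟨h1, h2⟩ a b c d hsub hbad
    unfold Bad at hbad
    rcases hbad with h|h|h|h|h|h|h|h
    · exact h2 (Or.inl ⟨a,b,c,d,hsub, h⟩)
    · exact h2 (Or.inr (Or.inl ⟨a,b,c,d,hsub, h⟩))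
    · exact h2 (Or.inr (Or.inr (Or.inl ⟨a,b,c,d,hsub, h⟩)))
    · exact h2 (Or.inr (Or.inr (Or.inr ⟨a,b,c,d,hsub, h⟩)))
    · exact h1 (Or.inl ⟨a,b,c,d,hsub, h⟩)
    · exact h1 (Or.inr (Or.inl ⟨a,b,c,d,hsub, h⟩))
    · exact h1 (Or.inr (Or.inr (Or.inl ⟨a,b,c,d,hsub, h⟩)))
    · exact h1 (Or.inr (Or.inr (Or.inr ⟨a,b,c,d,hsub, h⟩)))
  · intro h
    constructor
    · rintro (⟨a,b,c,d,hsub,hi⟩|⟨a,b,c,d,hsub,hi⟩|⟨a,b,c,d,hsub,hi⟩|⟨a,b,c,d,hsub,hi⟩) <;>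
        exact h a b c d hsub (by unfold Bad; omega)
    · rintro (⟨a,b,c,d,hsub,hi⟩|⟨a,b,c,d,hsub,hi⟩|⟨a,b,c,d,hsub,hi⟩|⟨a,b,c,d,hsub,hi⟩) <;>
        exact h a b c d hsub (by unfold Bad; omega)

def famA (n k : ℕ) : List ℕ :=
  1 :: ((List.range' 2 (k-1)).reverse ++ (List.range' (k+1) (n-k)).reverse)

def famB (n m : ℕ) : List ℕ :=
  1 :: ((List.range' m (n+1-m)).reverse ++ 2 :: (List.range' 3 (m-3)).reverse)

lemma pair_cons {x y a : ℕ} {w : List ℕ} (h : [x,y].Sublist (a :: w)) :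
    (x = a ∧ y ∈ w) ∨ [x,y].Sublist w := by
  cases h with
  | cons _ h => exact Or.inr h
  | cons_cons _ h => exact Or.inl ⟨rfl, List.singleton_sublist.1 h⟩

lemma pair_split {x y : ℕ} {u v : List ℕ} (h : [x,y].Sublist (u ++ v)) :
    [x,y].Sublist u ∨ [x,y].Sublist v ∨ (x ∈ u ∧ y ∈ v) := by
  induction u with
  | nil => right; left; simpa using h
  | cons a u ih =>
    rcases pair_cons (by simpa using h) with ⟨rfl, hy⟩ | h'
    · rcases List.mem_append.1 hy with hy | hy
      · exact Or.inl ((List.singleton_sublist.2 hy).cons₂ x)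
      · exact Or.inr (Or.inr ⟨List.mem_cons_self, hy⟩)
    · rcases ih h' with h'' | h'' | ⟨hx, hy⟩
      · exact Or.inl (h''.cons a)
      · exact Or.inr (Or.inl h'')
      · exact Or.inr (Or.inr ⟨List.mem_cons_of_mem _ hx, hy⟩)

lemma mem_revrange {x s len : ℕ} (h : x ∈ (List.range' s len).reverse) :
    s ≤ x ∧ x < s + len := by
  rw [List.mem_reverse, List.mem_range'_1] at h; exact h

lemma pair_revrange {x y s len : ℕ} (h : [x,y].Sublist ((List.range' s len).reverse)) :
    s ≤ y ∧ y < x ∧ x < s + len := by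
  have hp : ((List.range' s len).reverse).Pairwise (· > ·) := by
    rw [List.pairwise_reverse]
    exact List.pairwise_lt_range' (s := s) (n := len) 1 (by omega)
  have hxy : y < x := by
    have := hp.sublist h
    simpa using this
  have hx := mem_revrange (h.subset (show x ∈ [x,y] by simp))
  have hy := mem_revrange (h.subset (show y ∈ [x,y] by simp))
  exact ⟨hy.1, hxy, hx.2⟩

lemma pairA {n k x y : ℕ} (hk2 : 2 ≤ k) (h : [x,y].Sublist (famA n k)) :
    x = 1 ∨ (x ≤ k ∧ k < y) ∨ (y < x ∧ 2 ≤ y ∧ (x ≤ k ∨ k < y)) := by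
  unfold famA at h
  rcases pair_cons h with ⟨rfl, -⟩ | h
  · exact Or.inl rfl
  rcases pair_split h with h | h | ⟨hx, hy⟩
  · have := pair_revrange h; right; right; omega
  · have := pair_revrange h; right; right; omega
  · have hx := mem_revrange hx
    have hy := mem_revrange hy
    right; left; omega

lemma pairB {n m x y : ℕ} (hm : 3 ≤ m) (h : [x,y].Sublist (famB n m)) :
    x = 1 ∨ (m ≤ x ∧ y < x ∧ 2 ≤ y) ∨ (x = 2 ∧ 3 ≤ y ∧ y < m) ∨
      (3 ≤ x ∧ x < m ∧ 3 ≤ y ∧ y < x) := by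
  unfold famB at h
  rcases pair_cons h with ⟨rfl, -⟩ | h
  · exact Or.inl rfl
  rcases pair_split h with h | h | ⟨hx, hy⟩
  · have := pair_revrange h; right; left; omega
  · rcases pair_cons h with ⟨rfl, hy⟩ | h
    · have := mem_revrange hy; right; right; left; omega
    · have := pair_revrange h; right; right; right; omega
  · have hx := mem_revrange hx
    right; left
    rcases List.mem_cons.1 hy with rfl | hy
    · omega
    · have := mem_revrange hy; omega

lemma quad_pairs {a b c d : ℕ} {l : List ℕ} (h : [a,b,c,d].Sublist l) :
    [a,b].Sublist l ∧ [a,c].Sublist l ∧ [a,d].Sublist l ∧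
    [b,c].Sublist l ∧ [b,d].Sublist l ∧ [c,d].Sublist l := by
  refine ⟨List.Sublist.trans ?_ h, List.Sublist.trans ?_ h, List.Sublist.trans ?_ h,
    List.Sublist.trans ?_ h, List.Sublist.trans ?_ h, List.Sublist.trans ?_ h⟩
  · exact (List.nil_sublist [c,d]).cons₂ b |>.cons₂ a
  · exact ((List.nil_sublist [d]).cons₂ c |>.cons b).cons₂ a
  · exact (((List.nil_sublist []).cons₂ d).cons c |>.cons b).cons₂ a
  · exact ((List.nil_sublist [d]).cons₂ c |>.cons₂ b).cons a
  · exact (((List.nil_sublist []).cons₂ d).cons c |>.cons₂ b).cons a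
  · exact (((List.nil_sublist []).cons₂ d).cons₂ c |>.cons b).cons a

lemma famA_avoid {n k : ℕ} (hk2 : 2 ≤ k) :
    ∀ a b c d, [a,b,c,d].Sublist (famA n k) → ¬ Bad a b c d := by
  intro a b c d h hbad
  obtain ⟨p1, p2, p3, p4, p5, p6⟩ := quad_pairs h
  have q1 := pairA hk2 p1; have q2 := pairA hk2 p2; have q3 := pairA hk2 p3
  have q4 := pairA hk2 p4; have q5 := pairA hk2 p5; have q6 := pairA hk2 p6
  unfold Bad at hbad
  omega

lemma famB_avoid {n m : ℕ} (hm : 3 ≤ m) :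
    ∀ a b c d, [a,b,c,d].Sublist (famB n m) → ¬ Bad a b c d := by
  intro a b c d h hbad
  obtain ⟨p1, p2, p3, p4, p5, p6⟩ := quad_pairs h
  have q1 := pairB hm p1; have q2 := pairB hm p2; have q3 := pairB hm p3
  have q4 := pairB hm p4; have q5 := pairB hm p5; have q6 := pairB hm p6
  unfold Bad at hbad
  omega

lemma famA_isCirc {n k : ℕ} (hk2 : 2 ≤ k) (hk : k ≤ n - 1) (hn : 3 ≤ n) :
    IsCirc n (famA n k) := by
  constructor
  · unfold famA
    have hr : List.range' 1 n = 1 :: List.range' 2 (n-1) := by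
      conv_lhs => rw [show n = (n-1)+1 by omega]
      rw [List.range'_succ]
    rw [hr]
    refine List.Perm.cons _ ?_
    have hsplit : List.range' 2 (k-1) ++ List.range' (k+1) (n-k) = List.range' 2 (n-1) := by
      have h := List.range'_append (s := 2) (m := k-1) (n := n-k) (step := 1)
      simp only [one_mul] at h
      rw [show 2 + (k-1) = k + 1 by omega] at h
      rw [h, show k - 1 + (n - k) = n - 1 by omega]
    exact List.Perm.trans
      (List.Perm.append (List.reverse_perm _) (List.reverse_perm _)) (hsplit ▸ List.Perm.refl _)
  · rfl

lemma famB_isCirc {n m : ℕ} (hm : 3 ≤ m) (hmn : m ≤ n) (hn : 3 ≤ n) :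
    IsCirc n (famB n m) := by
  constructor
  · unfold famB
    have hr : List.range' 1 n = 1 :: 2 :: List.range' 3 (n-2) := by
      conv_lhs => rw [show n = (n-2)+1+1 by omega]
      rw [List.range'_succ, List.range'_succ]
    rw [hr]
    refine List.Perm.cons _ ?_
    refine List.Perm.trans List.perm_middle (List.Perm.cons _ ?_)
    have hsplit : List.range' 3 (m-3) ++ List.range' m (n+1-m) = List.range' 3 (n-2) := by
      have h := List.range'_append (s := 3) (m := m-3) (n := n+1-m) (step := 1)
      simp only [one_mul] at h
      rw [show 3 + (m-3) = m by omega] at h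
      rw [h, show m - 3 + (n + 1 - m) = n - 2 by omega]
    refine List.Perm.trans (List.Perm.append (List.reverse_perm _) (List.reverse_perm _)) ?_
    exact List.Perm.trans List.perm_append_comm (hsplit ▸ List.Perm.refl _)
  · rfl

lemma pair_of_pairwise_gt {l : List ℕ} (hp : l.Pairwise (· > ·)) {x y : ℕ}
    (hx : x ∈ l) (hy : y ∈ l) (hxy : y < x) : [x,y].Sublist l := by
  induction l with
  | nil => cases hx
  | cons a t ih =>
    have ha : ∀ b ∈ t, a > b := (List.pairwise_cons.1 hp).1
    have hp' : t.Pairwise (· > ·) := (List.pairwise_cons.1 hp).2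
    rcases List.mem_cons.1 hx with rfl | hx'
    · have hy' : y ∈ t := by
        rcases List.mem_cons.1 hy with rfl | h; · omega
        · exact h
      exact (List.singleton_sublist.2 hy').cons₂ x
    · have hy' : y ∈ t := by
        rcases List.mem_cons.1 hy with rfl | h
        · exact absurd (ha x hx') (by omega)
        · exact h
      exact (ih hp' hx' hy').cons a

lemma revrange_pairwise (s len : ℕ) : ((List.range' s len).reverse).Pairwise (· > ·) := by
  rw [List.pairwise_reverse]
  exact List.pairwise_lt_range' (s := s) (n := len) 1 (by omega)

lemma mem_revrange' {x s len : ℕ} (h1 : s ≤ x) (h2 : x < s + len) :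
    x ∈ (List.range' s len).reverse := by
  rw [List.mem_reverse, List.mem_range'_1]; exact ⟨h1, h2⟩

lemma revrange_pair {s len x y : ℕ} (hy : s ≤ y) (hxy : y < x) (hx : x < s + len) :
    [x,y].Sublist ((List.range' s len).reverse) :=
  pair_of_pairwise_gt (revrange_pairwise s len)
    (mem_revrange' (by omega) hx) (mem_revrange' hy (by omega)) hxy

lemma revrange_head {s len : ℕ} (h : 1 ≤ len) :
    ((List.range' s len).reverse).head? = some (s + len - 1) := by
  rw [List.head?_reverse, show len = (len-1)+1 by omega, List.range'_concat,
    List.getLast?_concat]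
  congr 1; omega

lemma revrange_getLast {s len : ℕ} (h : 1 ≤ len) :
    ((List.range' s len).reverse).getLast? = some s := by
  rw [List.getLast?_reverse, show len = (len-1)+1 by omega, List.range'_succ]
  rfl

lemma occ_1xNy {x y N : ℕ} {w v : List ℕ} (hx : x ∈ w) (hy : y ∈ v) :
    [1, x, N, y].Sublist (1 :: (w ++ N :: v)) := by
  refine List.Sublist.cons₂ _ ?_
  have : [x] ++ (N :: [y])  = [x, N, y] := rfl
  rw [← this]
  exact List.Sublist.append (List.singleton_sublist.2 hx)
    ((List.singleton_sublist.2 hy).cons₂ N)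

lemma occ_1xyN {x y N : ℕ} {w v : List ℕ} (hxy : [x,y].Sublist w) :
    [1, x, y, N].Sublist (1 :: (w ++ N :: v)) := by
  refine List.Sublist.cons₂ _ ?_
  have : [x,y] ++ [N] = [x, y, N] := rfl
  rw [← this]
  exact List.Sublist.append hxy ((List.nil_sublist v).cons₂ N)

lemma isCirc_cons {n : ℕ} {l : List ℕ} (h : IsCirc n l) : ∃ r, l = 1 :: r := by
  rcases l with _ | ⟨a, r⟩
  · simp [IsCirc] at h
  · have := h.2
    simp only [List.head?_cons, Option.some.injEq] at this
    exact ⟨r, by rw [this]⟩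

lemma famA_succ {n k : ℕ} (hk2 : 2 ≤ k) (hk : k ≤ n-1) (hn : 3 ≤ n) :
    famA (n+1) k = 1 :: ((List.range' 2 (k-1)).reverse ++
      (n+1) :: (List.range' (k+1) (n-k)).reverse) := by
  unfold famA
  congr 2
  rw [show n+1-k = (n-k)+1 by omega, List.range'_concat, List.reverse_append,
    show k+1+1*(n-k) = n+1 by omega]
  rfl

lemma famB_succ {n m : ℕ} (hm3 : 3 ≤ m) (hmn : m ≤ n) :
    famB (n+1) m = 1 :: ((n+1) :: (List.range' m (n+1-m)).reverse ++
      2 :: (List.range' 3 (m-3)).reverse) := by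
  unfold famB
  congr 3
  rw [show n+1+1-m = (n+1-m)+1 by omega, List.range'_concat, List.reverse_append,
    show m+1*(n+1-m) = n+1 by omega]
  rfl

def Fam (n : ℕ) : Set (List ℕ) :=
  (famA n '' Set.Icc 2 (n-1)) ∪ (famB n '' Set.Icc 3 n)

theorem structure_thm : ∀ n, 3 ≤ n → ∀ l, IsCirc n l →
    (∀ a b c d, [a,b,c,d].Sublist l → ¬ Bad a b c d) → l ∈ Fam n := by
  intro n hn
  induction n, hn using Nat.le_induction with
  | base =>
    intro l hcirc _
    obtain ⟨r, rfl⟩ := isCirc_cons hcirc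
    have hr : r.Perm [2,3] := by
      have := hcirc.1
      rw [show List.range' 1 3 = [1,2,3] by rfl] at this
      exact this.cons_inv
    have hlen : r.length = 2 := hr.length_eq
    obtain ⟨a, b, rfl⟩ : ∃ a b, r = [a, b] := by
      rcases r with _|⟨a,_|⟨b,_|r⟩⟩ <;> simp at hlen
      exact ⟨a, b, rfl⟩
    have h2 : 2 ∈ [a,b] := hr.mem_iff.2 (by norm_num)
    have h3 : 3 ∈ [a,b] := hr.mem_iff.2 (by norm_num)
    simp only [List.mem_cons, List.not_mem_nil, or_false] at h2 h3
    have : (a = 2 ∧ b = 3) ∨ (a = 3 ∧ b = 2) := by omega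
    rcases this with ⟨rfl, rfl⟩ | ⟨rfl, rfl⟩
    · exact Or.inl ⟨2, by norm_num, by decide⟩
    · exact Or.inr ⟨3, by norm_num, by decide⟩
  | succ n hn ih =>
    intro l hcirc havoid
    obtain ⟨r, rfl⟩ := isCirc_cons hcirc
    have hmemN : (n+1) ∈ (1 :: r) := by
      refine hcirc.1.mem_iff.2 ?_
      rw [List.mem_range'_1]; omega
    have hmemN' : (n+1) ∈ r := by
      rcases List.mem_cons.1 hmemN with h | h
      · omega
      · exact h
    obtain ⟨w, v, rfl⟩ := List.append_of_mem hmemN'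
    -- base list
    have hperm : (1 :: (w ++ v)).Perm (List.range' 1 n) := by
      have h1 : (1 :: (w ++ (n+1) :: v)).Perm (List.range' 1 n ++ [n+1]) := by
        have := hcirc.1
        rwa [show List.range' 1 (n+1) = List.range' 1 n ++ [n+1] by
          rw [List.range'_concat, one_mul, Nat.add_comm]] at this
      have h2 : (1 :: (w ++ (n+1) :: v)).Perm ((n+1) :: (1 :: (w ++ v))) := by
        refine List.Perm.trans (List.Perm.cons _ List.perm_middle) ?_
        exact List.Perm.swap _ _ _
      have h3 : (List.range' 1 n ++ [n+1]).Perm ((n+1) :: List.range' 1 n) := by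
        have : List.range' 1 n ++ [n+1] = List.range' 1 n ++ (n+1) :: [] := rfl
        rw [this]
        simpa using (List.perm_middle (a := n+1) (l₁ := List.range' 1 n) (l₂ := []))
      exact (h2.symm.trans (h1.trans h3)).cons_inv
    have hbase_circ : IsCirc n (1 :: (w ++ v)) := ⟨hperm, rfl⟩
    have hbase_sub : (1 :: (w ++ v)).Sublist (1 :: (w ++ (n+1) :: v)) :=
      ((List.sublist_cons_self (n+1) v).append_left w).cons₂ 1
    have hbase_avoid : ∀ a b c d, [a,b,c,d].Sublist (1 :: (w ++ v)) → ¬ Bad a b c d :=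
      fun a b c d h => havoid a b c d (h.trans hbase_sub)
    have hbase_mem := ih _ hbase_circ hbase_avoid
    -- nodup of base tail
    have hnodup : (w ++ v).Nodup := by
      have : (1 :: (w ++ v)).Nodup := hperm.nodup_iff.2 (List.nodup_range' (s := 1) (n := n))
      exact (List.nodup_cons.1 this).2
    rcases hbase_mem with ⟨k, hk, hfam⟩ | ⟨m, hm, hfam⟩
    · -- famA case
      simp only [Set.mem_Icc] at hk
      have hk2 : 2 ≤ k := hk.1
      have hkn : k ≤ n - 1 := hk.2
      unfold famA at hfam
      have heq : w ++ v = (List.range' 2 (k-1)).reverse ++ (List.range' (k+1) (n-k)).reverse :=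
        (List.cons.inj hfam).2.symm
      rcases List.append_eq_append_iff.1 heq with ⟨a', ha1, ha2⟩ | ⟨c', hc1, hc2⟩
      · -- D1 = w ++ a', v = a' ++ D2
        rcases eq_or_ne a' [] with rfl | ha'ne
        · -- w = D1, v = D2 : famA (n+1) k
          rw [List.append_nil] at ha1
          left
          refine ⟨k, by simp only [Set.mem_Icc]; omega, ?_⟩
          rw [famA_succ hk2 hkn hn, ← ha1, ha2]
          simp
        · have h2a : 2 ∈ a' := by
            have hgl : ((List.range' 2 (k-1)).reverse).getLast? = some 2 := by
              rw [revrange_getLast (by omega)]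
            rw [ha1, List.getLast?_append_of_ne_nil _ ha'ne] at hgl
            exact List.mem_of_mem_getLast? hgl
          have h2v : 2 ∈ v := by rw [ha2]; exact List.mem_append_left _ h2a
          rcases eq_or_ne w [] with rfl | hwne
          · -- w = [] : a' = D1
            simp only [List.nil_append] at ha1
            rcases Nat.lt_or_ge k 3 with hk3 | hk3
            · -- k = 2 : famB (n+1) (n+1)
              have hk2' : k = 2 := by omega
              subst hk2'
              right
              refine ⟨n+1, by simp only [Set.mem_Icc]; omega, ?_⟩
              unfold famB
              rw [show n+1+1-(n+1) = 1 by omega, show n+1-3 = n-2 by omega]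
              simp only [List.nil_append]
              have hD1 : (List.range' 2 (2-1)).reverse = [2] := by decide
              rw [ha2, ← ha1, hD1]
              simp [List.range'_succ]
            · -- k ≥ 3 : violation [n+1, k, 2, k+1]
              exfalso
              have hsubq : [n+1, k, 2, k+1].Sublist (1 :: ([] ++ (n+1) :: v)) := by
                simp only [List.nil_append]
                refine List.Sublist.cons 1 ?_
                refine List.Sublist.cons₂ _ ?_
                rw [ha2, ← ha1]
                have t1 : [k, 2].Sublist ((List.range' 2 (k-1)).reverse) :=
                  revrange_pair (le_refl 2) (by omega) (by omega)
                have t2 : [k+1].Sublist ((List.range' (k+1) (n-k)).reverse) :=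
                  List.singleton_sublist.2 (mem_revrange' (le_refl _) (by omega))
                exact (List.Sublist.append t1 t2 : ([k,2] ++ [k+1]).Sublist _)
              exact havoid _ _ _ _ hsubq (by unfold Bad; omega)
          · -- w ≠ [] : violation [1, k, n+1, 2]
            exfalso
            have hkw : k ∈ w := by
              have hh : ((List.range' 2 (k-1)).reverse).head? = some k := by
                rw [revrange_head (by omega)]; congr 1; omega
              rw [ha1, List.head?_append_of_ne_nil _ hwne] at hh
              exact List.mem_of_mem_head? hh
            have hk3 : 3 ≤ k := by
              -- if k = 2, D1 = [2] can't split into two nonempty parts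
              by_contra hk3
              have hk2' : k = 2 := by omega
              subst hk2'
              have : ((List.range' 2 1).reverse).length = w.length + a'.length := by
                rw [ha1, List.length_append]
              simp at this
              rcases w with _|⟨x, w⟩; · exact hwne rfl
              rcases a' with _|⟨y, a'⟩; · exact ha'ne rfl
              simp at this; omega
            exact havoid _ _ _ _ (occ_1xNy hkw h2v) (by unfold Bad; omega)
      · -- w = D1 ++ c', D2 = c' ++ v
        rcases eq_or_ne c' [] with rfl | hc'ne
        · -- w = D1, v = D2 : famA (n+1) k
          rw [List.append_nil] at hc1
          simp only [List.nil_append] at hc2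
          left
          refine ⟨k, by simp only [Set.mem_Icc]; omega, ?_⟩
          rw [famA_succ hk2 hkn hn, hc1, ← hc2]
        · rcases eq_or_ne v [] with rfl | hvne
          · -- v = [] : violation [1, 2, k+1, n+1]
            exfalso
            rw [List.append_nil] at hc2
            have hsub2 : [2, k+1].Sublist w := by
              rw [hc1]
              have h2D1 : [2].Sublist ((List.range' 2 (k-1)).reverse) :=
                List.singleton_sublist.2 (mem_revrange' (le_refl 2) (by omega))
              have hk1c : [k+1].Sublist c' := by
                rw [← hc2]
                exact List.singleton_sublist.2 (mem_revrange' (le_refl _) (by omega))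
              exact (List.Sublist.append h2D1 hk1c : ([2] ++ [k+1]).Sublist _)
            exact havoid _ _ _ _ (occ_1xyN hsub2) (by unfold Bad; omega)
          · -- v ≠ [] : violation [1, x, n+1, k+1] with x ∈ c'
            exfalso
            have hk1v : (k+1) ∈ v := by
              have hgl : ((List.range' (k+1) (n-k)).reverse).getLast? = some (k+1) := by
                rw [revrange_getLast (by omega)]
              rw [hc2, List.getLast?_append_of_ne_nil _ hvne] at hgl
              exact List.mem_of_mem_getLast? hgl
            obtain ⟨x, hx⟩ := List.exists_mem_of_ne_nil c' hc'ne
            have hxD2 : x ∈ (List.range' (k+1) (n-k)).reverse := by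
              rw [hc2]; exact List.mem_append_left _ hx
            have hxb := mem_revrange hxD2
            have hxw : x ∈ w := by rw [hc1]; exact List.mem_append_right _ hx
            have hxne : x ≠ k+1 := by
              intro h
              subst h
              have hnd : ((List.range' (k+1) (n-k)).reverse).Nodup :=
                List.nodup_reverse.2 List.nodup_range'
              rw [hc2, List.nodup_append] at hnd
              exact hnd.2.2 _ hx _ hk1v rfl
            exact havoid _ _ _ _ (occ_1xNy hxw hk1v) (by unfold Bad; omega)
    · -- famB case
      simp only [Set.mem_Icc] at hm
      have hm3 : 3 ≤ m := hm.1
      have hmn : m ≤ n := hm.2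
      unfold famB at hfam
      have heq : w ++ v =
          (List.range' m (n+1-m)).reverse ++ 2 :: (List.range' 3 (m-3)).reverse :=
        (List.cons.inj hfam).2.symm
      have hnH : n ∈ (List.range' m (n+1-m)).reverse :=
        mem_revrange' (by omega) (by omega)
      rcases List.append_eq_append_iff.1 heq with ⟨a', ha1, ha2⟩ | ⟨c', hc1, hc2⟩
      · rcases eq_or_ne w [] with rfl | hwne
        · -- w = [] : famB (n+1) m
          simp only [List.nil_append] at ha1
          right
          refine ⟨m, by simp only [Set.mem_Icc]; omega, ?_⟩
          rw [famB_succ hm3 hmn, ha2, ← ha1]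
          simp
        · -- w ≠ [] : violation [1, n, n+1, 2]
          exfalso
          have hnw : n ∈ w := by
            have hh : ((List.range' m (n+1-m)).reverse).head? = some n := by
              rw [revrange_head (by omega)]; congr 1; omega
            rw [ha1, List.head?_append_of_ne_nil _ hwne] at hh
            exact List.mem_of_mem_head? hh
          have h2v : 2 ∈ v := by
            rw [ha2]; exact List.mem_append_right _ (List.mem_cons_self)
          exact havoid _ _ _ _ (occ_1xNy hnw h2v) (by unfold Bad; omega)
      · rcases eq_or_ne c' [] with rfl | hc'ne
        · -- w = H, v = 2::E : violation [1, n, n+1, 2]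
          exfalso
          rw [List.append_nil] at hc1
          simp only [List.nil_append] at hc2
          have hnw : n ∈ w := by rw [hc1]; exact hnH
          have h2v : 2 ∈ v := by rw [← hc2]; exact List.mem_cons_self
          exact havoid _ _ _ _ (occ_1xNy hnw h2v) (by unfold Bad; omega)
        · obtain ⟨c'', rfl⟩ : ∃ c'', c' = 2 :: c'' := by
            rcases c' with _|⟨x, c''⟩
            · exact absurd rfl hc'ne
            · have := List.cons.inj hc2
              exact ⟨c'', by rw [this.1]⟩
          have hE : (List.range' 3 (m-3)).reverse = c'' ++ v := (List.cons.inj hc2).2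
          rcases eq_or_ne v [] with rfl | hvne
          · rw [List.append_nil] at hE
            rcases Nat.lt_or_ge m 4 with hm4 | hm4
            · -- m = 3 : famA (n+1) n
              have hm3' : m = 3 := by omega
              subst hm3'
              have hc''nil : c'' = [] := by
                have := hE.symm
                simpa using this
              subst hc''nil
              left
              refine ⟨n, by simp only [Set.mem_Icc]; omega, ?_⟩
              unfold famA
              rw [show n+1-n = 1 by omega, show n-1 = (n-2)+1 by omega,
                List.range'_succ, List.range'_one]
              rw [hc1]
              simp [show (3:ℕ)+1 = 4 by rfl]
            · -- m ≥ 4 : violation [1, 2, 3, n+1]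
              exfalso
              have h3E : 3 ∈ c'' := by
                rw [← hE]; exact mem_revrange' (le_refl 3) (by omega)
              have hsub2 : [2, 3].Sublist w := by
                rw [hc1]
                refine List.sublist_append_of_sublist_right ?_
                exact (List.singleton_sublist.2 h3E).cons₂ 2
              exact havoid _ _ _ _ (occ_1xyN hsub2) (by unfold Bad; omega)
          · -- v ≠ [] : violation [1, n, n+1, y] with y ∈ v
            exfalso
            obtain ⟨y, hy⟩ := List.exists_mem_of_ne_nil v hvne
            have hyE : y ∈ (List.range' 3 (m-3)).reverse := by
              rw [hE]; exact List.mem_append_right _ hy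
            have hyb := mem_revrange hyE
            have hnw : n ∈ w := by rw [hc1]; exact List.mem_append_left _ hnH
            exact havoid _ _ _ _ (occ_1xNy hnw hy) (by unfold Bad; omega)

lemma famA_tail_head {n k : ℕ} (hk2 : 2 ≤ k) : (famA n k).tail.head? = some k := by
  unfold famA
  rw [List.tail_cons, List.head?_append_of_ne_nil]
  · rw [revrange_head (by omega)]; congr 1; omega
  · have : ((List.range' 2 (k-1)).reverse).length = k - 1 := by simp
    intro h
    rw [h] at this
    simp at this
    omega

lemma famB_tail_head {n m : ℕ} (hm3 : 3 ≤ m) (hmn : m ≤ n) :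
    (famB n m).tail.head? = some n := by
  unfold famB
  rw [List.tail_cons, List.head?_append_of_ne_nil]
  · rw [revrange_head (by omega)]; congr 1; omega
  · have : ((List.range' m (n+1-m)).reverse).length = n+1-m := by simp
    intro h
    rw [h] at this
    simp at this
    omega

lemma eq_of_append_two {L₁ L₂ E₁ E₂ : List ℕ} (h1 : 2 ∉ L₁) (h2 : 2 ∉ L₂)
    (h : L₁ ++ 2 :: E₁ = L₂ ++ 2 :: E₂) : L₁ = L₂ := by
  rcases List.append_eq_append_iff.1 h with ⟨a', ha1, ha2⟩ | ⟨c', hc1, hc2⟩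
  · rcases eq_or_ne a' [] with rfl | hne
    · rw [ha1, List.append_nil]
    · exfalso
      rcases a' with _|⟨x, a''⟩
      · exact hne rfl
      · have := List.cons.inj ha2
        apply h2
        rw [ha1, this.1]
        exact List.mem_append_right _ (List.mem_cons_self)
  · rcases eq_or_ne c' [] with rfl | hne
    · rw [hc1, List.append_nil]
    · exfalso
      rcases c' with _|⟨x, c''⟩
      · exact hne rfl
      · have := List.cons.inj hc2
        apply h1
        rw [hc1, this.1]
        exact List.mem_append_right _ (List.mem_cons_self)

lemma famB_inj {n : ℕ} (hn : 3 ≤ n) : Set.InjOn (famB n) (Set.Icc 3 n) := by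
  intro m₁ hm₁ m₂ hm₂ h
  simp only [Set.mem_Icc] at hm₁ hm₂
  unfold famB at h
  have h' := (List.cons.inj h).2
  have hL : (List.range' m₁ (n+1-m₁)).reverse = (List.range' m₂ (n+1-m₂)).reverse := by
    refine eq_of_append_two ?_ ?_ h'
    · intro hmem
      have := mem_revrange hmem; omega
    · intro hmem
      have := mem_revrange hmem; omega
  have hlen : n+1-m₁ = n+1-m₂ := by
    have := congrArg List.length hL
    simpa using this
  omega

lemma famA_inj {n : ℕ} (hn : 3 ≤ n) : Set.InjOn (famA n) (Set.Icc 2 (n-1)) := by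
  intro k₁ hk₁ k₂ hk₂ h
  simp only [Set.mem_Icc] at hk₁ hk₂
  have e1 := famA_tail_head (n := n) (k := k₁) hk₁.1
  have e2 := famA_tail_head (n := n) (k := k₂) hk₂.1
  rw [h, e2] at e1
  exact (Option.some.injEq _ _ ▸ e1).symm ▸ rfl

lemma fam_disjoint {n : ℕ} (hn : 3 ≤ n) :
    Disjoint (famA n '' Set.Icc 2 (n-1)) (famB n '' Set.Icc 3 n) := by
  rw [Set.disjoint_left]
  rintro l ⟨k, hk, rfl⟩ ⟨m, hm, hBm⟩
  simp only [Set.mem_Icc] at hk hm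
  have e1 := famA_tail_head (n := n) (k := k) hk.1
  have e2 := famB_tail_head (n := n) (m := m) hm.1 hm.2
  rw [hBm, e1] at e2
  simp only [Option.some.injEq] at e2
  omega

/-- For `n ≥ 3`, the number of circular permutations of `[n]` avoiding both
`[1342]` and `[1234]` is `2(n-2)`. -/
theorem avoid_1342_1234_count (n : ℕ) (hn : 3 ≤ n) :
    {l : List ℕ | IsCirc n l ∧ ¬ CContains l [1, 3, 4, 2] ∧
      ¬ CContains l [1, 2, 3, 4]}.ncard = 2 * (n - 2) := by
  have hset : {l : List ℕ | IsCirc n l ∧ ¬ CContains l [1, 3, 4, 2] ∧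
      ¬ CContains l [1, 2, 3, 4]} = Fam n := by
    ext l
    constructor
    · rintro ⟨hc, h1, h2⟩
      exact structure_thm n hn l hc ((avoid_iff l).1 ⟨h1, h2⟩)
    · rintro (⟨k, hk, rfl⟩ | ⟨m, hm, rfl⟩)
      · simp only [Set.mem_Icc] at hk
        have hav := (avoid_iff (famA n k)).2 (famA_avoid hk.1)
        exact ⟨famA_isCirc hk.1 hk.2 hn, hav.1, hav.2⟩
      · simp only [Set.mem_Icc] at hm
        have hav := (avoid_iff (famB n m)).2 (famB_avoid hm.1)
        exact ⟨famB_isCirc hm.1 hm.2 hn, hav.1, hav.2⟩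
  rw [hset]
  unfold Fam
  have hIccA : (Set.Icc 2 (n-1) : Set ℕ) = ↑(Finset.Icc 2 (n-1)) := by
    simp
  have hIccB : (Set.Icc 3 n : Set ℕ) = ↑(Finset.Icc 3 n) := by simp
  have hfinA : (famA n '' Set.Icc 2 (n-1)).Finite :=
    (Set.finite_Icc _ _).image _
  have hfinB : (famB n '' Set.Icc 3 n).Finite :=
    (Set.finite_Icc _ _).image _
  rw [Set.ncard_union_eq (fam_disjoint hn) hfinA hfinB,
    Set.ncard_image_of_injOn (famA_inj hn), Set.ncard_image_of_injOn (famB_inj hn),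
    hIccA, hIccB, Set.ncard_coe_finset, Set.ncard_coe_finset,
    Nat.card_Icc, Nat.card_Icc]
  omega
end

section
/- A circled composition of n is a composition (a_1,...,a_k) of n together with a subset C of [k] containing 1 and k such that a_i = 1 for all i in C. For n ≥ 2, circled compositions of n are in bijection with circular permutations of [n] avoiding [1324]; in particular the number of circled compositions of n equals F_{2n-4}, where F_0 = F_1 = 1 and F_m = F_{m-1} + F_{m-2}. -/
/-- A circled composition of `n`, encoded as a list of parts each with a
`Bool` flag (`true` = circled): all parts are positive, circled parts equal
`1`, the parts sum to `n`, and the first and last parts are circled. -/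
def IsCircledComp (n : ℕ) (l : List (ℕ × Bool)) : Prop :=
  (∀ p ∈ l, 0 < p.1) ∧ (∀ p ∈ l, p.2 = true → p.1 = 1) ∧
  (l.map Prod.fst).sum = n ∧
  l.head?.map Prod.snd = some true ∧ l.getLast?.map Prod.snd = some true

/-- Fibonacci numbers with `F 0 = F 1 = 1`. -/
def F : ℕ → ℕ
  | 0 => 1
  | 1 => 1
  | n + 2 => F (n + 1) + F n

theorem F_eq_fib : ∀ k, F k = Nat.fib (k + 1)
  | 0 => rfl
  | 1 => rfl
  | (k+2) => by
      have h : Nat.fib (k+1+2) = Nat.fib (k+1) + Nat.fib (k+1+1) := Nat.fib_add_two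
      rw [show k+1+2 = k+2+1 from by omega, show k+1+1 = k+2 from by omega] at h
      rw [F, F_eq_fib (k+1), F_eq_fib k, show k+1+1 = k+2 from by omega]
      omega

/-- Inner (unconstrained-ends) flagged compositions of `m`. -/
def InnerComp (m : ℕ) (l : List (ℕ × Bool)) : Prop :=
  (∀ p ∈ l, 0 < p.1) ∧ (∀ p ∈ l, p.2 = true → p.1 = 1) ∧ (l.map Prod.fst).sum = m

/-- Possible heads of an inner composition of `m`. -/
def H (m : ℕ) : List (ℕ × Bool) := (1, true) :: (List.range m).map (fun a => (a+1, false))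

lemma H_pos {m : ℕ} {p : ℕ × Bool} (h : p ∈ H m) : 1 ≤ p.1 := by
  simp only [H, List.mem_cons, List.mem_map, List.mem_range] at h
  rcases h with h | ⟨a, _, h⟩ <;> subst h <;> simp

lemma H_le {m : ℕ} {p : ℕ × Bool} (h : p ∈ H (m+1)) : p.1 ≤ m + 1 := by
  simp only [H, List.mem_cons, List.mem_map, List.mem_range] at h
  rcases h with h | ⟨a, ha, h⟩ <;> subst h <;> simp
  omega

lemma H_flag {m : ℕ} {p : ℕ × Bool} (h : p ∈ H m) (ht : p.2 = true) : p.1 = 1 := by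
  simp only [H, List.mem_cons, List.mem_map, List.mem_range] at h
  rcases h with h | ⟨a, _, h⟩ <;> subst h
  · rfl
  · simp at ht

lemma mem_H {m : ℕ} {p : ℕ × Bool} (hpos : 0 < p.1) (hle : p.1 ≤ m + 1)
    (hflag : p.2 = true → p.1 = 1) : p ∈ H (m+1) := by
  obtain ⟨a, b⟩ := p
  cases b with
  | true =>
    have : a = 1 := hflag rfl
    subst this
    simp [H]
  | false =>
    simp only [H, List.mem_cons, List.mem_map, List.mem_range]
    right
    simp only at hpos hle
    have ha : a - 1 + 1 = a := by omega
    exact ⟨a - 1, by omega, by rw [ha]⟩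

lemma H_nodup (m : ℕ) : (H m).Nodup := by
  refine List.nodup_cons.2 ⟨?_, ?_⟩
  · simp
  · refine List.Nodup.map ?_ List.nodup_range
    intro a b hab
    simpa using hab

/-- All inner compositions of `m`, as a list. -/
def S : ℕ → List (List (ℕ × Bool))
  | 0 => [[]]
  | (m+1) => (H (m+1)).attach.flatMap fun p => (S (m+1 - p.1.1)).map (p.1 :: ·)
  decreasing_by
    have := H_pos p.2
    omega

lemma attach_flatMap {α β : Type*} (l : List α) (g : α → List β) :
    l.attach.flatMap (fun p => g p.1) = l.flatMap g := by
  induction l with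
  | nil => rfl
  | cons a t ih =>
    rw [List.attach_cons, List.flatMap_cons, List.flatMap_map, List.flatMap_cons]
    congr 1

lemma S_succ (m : ℕ) :
    S (m+1) = (H (m+1)).flatMap fun p => (S (m+1 - p.1)).map (p :: ·) := by
  rw [S]
  exact attach_flatMap (H (m+1)) (fun p => (S (m+1 - p.1)).map (p :: ·))

lemma mem_S : ∀ m l, l ∈ S m ↔ InnerComp m l := by
  intro m
  induction m using Nat.strong_induction_on with
  | _ m ih =>
    intro l
    match m with
    | 0 =>
      constructor
      · intro h
        simp only [S, List.mem_singleton] at h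
        subst h
        exact ⟨by simp, by simp, by simp⟩
      · rintro ⟨h1, h2, h3⟩
        cases l with
        | nil => simp [S]
        | cons p t =>
          exfalso
          have := h1 p (List.mem_cons_self)
          simp only [List.map_cons, List.sum_cons] at h3
          omega
    | (m+1) =>
      rw [S_succ, List.mem_flatMap]
      constructor
      · rintro ⟨p, hp, hl⟩
        rw [List.mem_map] at hl
        obtain ⟨l', hl', rfl⟩ := hl
        have hp1 := H_pos hp
        have hple := H_le hp
        obtain ⟨i1, i2, i3⟩ := (ih (m+1-p.1) (by omega) l').1 hl'
        refine ⟨?_, ?_, ?_⟩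
        · intro q hq
          rcases List.mem_cons.1 hq with rfl | hq
          · omega
          · exact i1 q hq
        · intro q hq hqt
          rcases List.mem_cons.1 hq with rfl | hq
          · exact H_flag hp hqt
          · exact i2 q hq hqt
        · simp only [List.map_cons, List.sum_cons, i3]
          omega
      · rintro ⟨h1, h2, h3⟩
        cases l with
        | nil => simp at h3
        | cons p t =>
          have hp1 : 0 < p.1 := h1 p (List.mem_cons_self)
          simp only [List.map_cons, List.sum_cons] at h3
          have hple : p.1 ≤ m + 1 := by omega
          have hInner : InnerComp (m+1-p.1) t :=
            ⟨fun q hq => h1 q (List.mem_cons_of_mem _ hq),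
             fun q hq => h2 q (List.mem_cons_of_mem _ hq),
             by omega⟩
          exact ⟨p, mem_H hp1 hple (h2 p (List.mem_cons_self)),
            List.mem_map.2 ⟨t, (ih (m+1-p.1) (by omega) t).2 hInner, rfl⟩⟩

lemma nodup_S : ∀ m, (S m).Nodup := by
  intro m
  induction m using Nat.strong_induction_on with
  | _ m ih =>
    match m with
    | 0 => simp [S]
    | (m+1) =>
      rw [S_succ, List.nodup_flatMap]
      constructor
      · intro p hp
        have := H_pos hp
        exact (ih (m+1-p.1) (by omega)).map (fun x y h => by simpa using h)
      · refine (H_nodup (m+1)).imp ?_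
        intro p q hne
        intro x hx hy
        rw [List.mem_map] at hx hy
        obtain ⟨x1, _, rfl⟩ := hx
        obtain ⟨y1, _, hy⟩ := hy
        exact hne (by simpa using congrArg List.head? hy.symm)

lemma fib_odd_sum : ∀ m : ℕ, ∑ k ∈ Finset.range (m+1), Nat.fib (2*k+1) = Nat.fib (2*m+2)
  | 0 => rfl
  | (m+1) => by
      rw [Finset.sum_range_succ, fib_odd_sum m,
        show 2*(m+1)+1 = 2*m+1+2 from by ring, show 2*(m+1)+2 = 2*m+2+2 from by ring]
      have h2 : Nat.fib (2*m+2+2) = Nat.fib (2*m+2) + Nat.fib (2*m+2+1) := Nat.fib_add_two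
      rw [show 2*m+2+1 = 2*m+1+2 from by ring] at h2
      omega

lemma length_S : ∀ m, (S m).length = Nat.fib (2*m+1) := by
  intro m
  induction m using Nat.strong_induction_on with
  | _ m ih =>
    match m with
    | 0 => simp [S]
    | (m+1) =>
      rw [S_succ, List.length_flatMap]
      have hH : H (m+1) = (1, true) :: (List.range (m+1)).map (fun a => (a+1, false)) := rfl
      rw [hH, List.map_cons, List.sum_cons, List.map_map]
      simp only [Function.comp_def, List.length_map, Nat.succ_sub_succ, Nat.add_sub_cancel,
        Nat.sub_zero]
      have hfun : (fun a => (S (m - a)).length) = fun a => Nat.fib (2*(m-a)+1) := by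
        funext a
        exact ih (m-a) (by omega)
      rw [hfun, ih m (by omega)]
      have hconv : ((List.range (m+1)).map fun a => Nat.fib (2*(m-a)+1)).sum
          = ∑ a ∈ Finset.range (m+1), Nat.fib (2*(m+1-1-a)+1) := rfl
      rw [hconv, Finset.sum_range_reflect (fun a => Nat.fib (2*a+1)) (m+1), fib_odd_sum m]
      rw [show 2*(m+1)+1 = 2*m+1+2 from by ring]
      have h : Nat.fib (2*m+1+2) = Nat.fib (2*m+1) + Nat.fib (2*m+1+1) := Nat.fib_add_two
      rw [show 2*m+1+1 = 2*m+2 from by ring] at h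
      omega

lemma ncard_inner (m : ℕ) : {l : List (ℕ × Bool) | InnerComp m l}.ncard = Nat.fib (2*m+1) := by
  have hset : {l : List (ℕ × Bool) | InnerComp m l} = ((S m).toFinset : Set (List (ℕ × Bool))) := by
    ext l
    simp [← mem_S m l]
  rw [hset, Set.ncard_coe_finset, List.toFinset_card_of_nodup (nodup_S m), length_S]

/-- For `n ≥ 2`, the number of circled compositions of `n` is `F_(2n-4)`. -/
theorem circled_comp_count (n : ℕ) (hn : 2 ≤ n) :
    {l : List (ℕ × Bool) | IsCircledComp n l}.ncard = F (2 * n - 4) := by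
  have himg : {l : List (ℕ × Bool) | IsCircledComp n l}
      = (fun l' => (1, true) :: (l' ++ [((1 : ℕ), true)])) '' {l | InnerComp (n-2) l} := by
    ext l
    simp only [Set.mem_setOf_eq, Set.mem_image]
    constructor
    · rintro ⟨h1, h2, h3, h4, h5⟩
      cases l with
      | nil => simp at h4
      | cons p t =>
        have hp2 : p.2 = true := by simpa using h4
        have hp1 : p.1 = 1 := h2 p (List.mem_cons_self) hp2
        have hp : p = (1, true) := Prod.ext hp1 hp2
        subst hp
        have ht : t ≠ [] := by
          rintro rfl
          simp at h3
          omega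
        obtain ⟨t', q, rfl⟩ : ∃ t' q, t = t' ++ [q] := ⟨t.dropLast, t.getLast ht,
          (List.dropLast_append_getLast ht).symm⟩
        have hq5 : q.2 = true := by
          have : ((1,true) :: (t' ++ [q])).getLast? = some q := by
            rw [show (1,true) :: (t' ++ [q]) = ((1,true) :: t') ++ [q] from by simp,
              List.getLast?_concat]
          rw [this] at h5
          simpa using h5
        have hq1 : q.1 = 1 := h2 q (by simp) hq5
        have hq : q = (1, true) := Prod.ext hq1 hq5
        subst hq
        refine ⟨t', ⟨?_, ?_, ?_⟩, rfl⟩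
        · intro r hr; exact h1 r (by simp [hr])
        · intro r hr; exact h2 r (by simp [hr])
        · simp only [List.map_cons, List.sum_cons, List.map_append, List.sum_append,
            List.map_nil, List.sum_nil] at h3
          omega
    · rintro ⟨l', ⟨i1, i2, i3⟩, rfl⟩
      refine ⟨?_, ?_, ?_, ?_, ?_⟩
      · intro q hq
        simp only [List.mem_cons, List.mem_append, List.mem_singleton,
          List.not_mem_nil, or_false] at hq
        rcases hq with rfl | hq | rfl
        · simp
        · exact i1 q hq
        · simp
      · intro q hq hqt
        simp only [List.mem_cons, List.mem_append, List.mem_singleton,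
          List.not_mem_nil, or_false] at hq
        rcases hq with rfl | hq | rfl
        · rfl
        · exact i2 q hq hqt
        · rfl
      · simp only [List.map_cons, List.sum_cons, List.map_append, List.sum_append,
          List.map_nil, List.sum_nil, i3]
        omega
      · simp
      · rw [show (1,true) :: (l' ++ [((1:ℕ),true)]) = ((1,true) :: l') ++ [((1:ℕ),true)] from by simp,
          List.getLast?_concat]
        rfl
  have hinj : Function.Injective
      (fun l' : List (ℕ × Bool) => (1, true) :: (l' ++ [((1:ℕ), true)])) := by
    intro a b h
    simp only [List.cons.injEq, true_and] at h
    exact List.append_cancel_right h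
  rw [himg, Set.ncard_image_of_injective _ hinj, ncard_inner, F_eq_fib]
  congr 1
  omega
end

section
/- For n ≥ 2 and i ≥ 0, the number of circled compositions of n with exactly i uncircled parts equals binomial(n+i-2, 2i). -/
namespace CircledAux

/-- Lists with positive parts, circled parts equal to 1, sum `n`, last part
circled, and `i` uncircled parts. -/
def TSet (n i : ℕ) : Set (List (ℕ × Bool)) :=
  {l | (∀ p ∈ l, 0 < p.1) ∧ (∀ p ∈ l, p.2 = true → p.1 = 1) ∧
    (l.map Prod.fst).sum = n ∧ l.getLast?.map Prod.snd = some true ∧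
    (l.filter (fun p => !p.2)).length = i}

/-- Elements of `TSet n i` whose head is uncircled. -/
def VSet (n i : ℕ) : Set (List (ℕ × Bool)) :=
  {l | l ∈ TSet n i ∧ l.head?.map Prod.snd = some false}

/-- Increment the first part of a list. -/
def bump : List (ℕ × Bool) → List (ℕ × Bool)
  | [] => []
  | (a, b) :: r => (a + 1, b) :: r

lemma finite_bounded (n : ℕ) :
    {l : List (ℕ × Bool) | (∀ p ∈ l, 0 < p.1) ∧ (l.map Prod.fst).sum ≤ n}.Finite := by
  induction n with
  | zero =>
    apply Set.Finite.subset (Set.finite_singleton ([] : List (ℕ × Bool)))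
    rintro l ⟨hpos, hsum⟩
    cases l with
    | nil => rfl
    | cons p r =>
      exfalso
      simp only [List.map_cons, List.sum_cons, Nat.le_zero] at hsum
      have := hpos p (by simp)
      omega
  | succ n ih =>
    apply Set.Finite.subset
      (Set.Finite.insert ([] : List (ℕ × Bool))
        (Set.Finite.image2 List.cons
          ((Set.finite_Iic (n + 1)).prod (Set.finite_univ (α := Bool))) ih))
    rintro l ⟨hpos, hsum⟩
    cases l with
    | nil => exact Set.mem_insert _ _
    | cons p r =>
      right
      simp only [List.map_cons, List.sum_cons] at hsum
      have hp1 : 0 < p.1 := hpos p (by simp)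
      refine Set.mem_image2_of_mem ⟨?_, Set.mem_univ _⟩ ⟨fun q hq => hpos q (by simp [hq]), ?_⟩
      · exact Set.mem_Iic.mpr (by omega)
      · omega

lemma finite_T (n i : ℕ) : (TSet n i).Finite := by
  apply Set.Finite.subset (finite_bounded n)
  rintro l ⟨hpos, -, hsum, -, -⟩
  exact ⟨hpos, hsum.le⟩

lemma finite_V (n i : ℕ) : (VSet n i).Finite :=
  (finite_T n i).subset fun l hl => hl.1

/-- Base cases. -/
lemma TSet_zero (i : ℕ) : TSet 0 i = ∅ := by
  ext l
  simp only [TSet, Set.mem_setOf_eq, Set.mem_empty_iff_false, iff_false]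
  rintro ⟨hpos, -, hsum, hlast, -⟩
  cases l with
  | nil => simp at hlast
  | cons p r =>
    simp only [List.map_cons, List.sum_cons] at hsum
    have := hpos p (by simp)
    omega

lemma TSet_one_zero : TSet 1 0 = {[(1, true)]} := by
  ext l
  simp only [TSet, Set.mem_setOf_eq, Set.mem_singleton_iff]
  constructor
  · rintro ⟨hpos, hcir, hsum, hlast, hfil⟩
    cases l with
    | nil => simp at hlast
    | cons p r =>
      cases r with
      | nil =>
        simp only [List.map_cons, List.map_nil, List.sum_cons, List.sum_nil] at hsum
        simp only [List.getLast?_singleton, Option.map_some] at hlast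
        have hp2 : p.2 = true := by simpa using hlast
        have : p = (1, true) := by
          have := hcir p (by simp) hp2
          exact Prod.ext this hp2
        simp [this]
      | cons q r' =>
        exfalso
        simp only [List.map_cons, List.sum_cons] at hsum
        have h1 := hpos p (by simp)
        have h2 := hpos q (by simp)
        omega
  · rintro rfl
    refine ⟨by simp, by simp, by simp, by simp, by simp⟩

lemma TSet_one_succ (i : ℕ) : TSet 1 (i + 1) = ∅ := by
  ext l
  simp only [TSet, Set.mem_setOf_eq, Set.mem_empty_iff_false, iff_false]
  rintro ⟨hpos, hcir, hsum, hlast, hfil⟩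
  cases l with
  | nil => simp at hlast
  | cons p r =>
    cases r with
    | nil =>
      simp only [List.getLast?_singleton, Option.map_some] at hlast
      have hp2 : p.2 = true := by simpa using hlast
      simp [List.filter, hp2] at hfil
    | cons q r' =>
      simp only [List.map_cons, List.sum_cons] at hsum
      have h1 := hpos p (by simp)
      have h2 := hpos q (by simp)
      omega

lemma VSet_one (i : ℕ) : VSet 1 i = ∅ := by
  ext l
  simp only [VSet, TSet, Set.mem_setOf_eq, Set.mem_empty_iff_false, iff_false]
  rintro ⟨⟨hpos, hcir, hsum, hlast, hfil⟩, hhead⟩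
  cases l with
  | nil => simp at hhead
  | cons p r =>
    simp only [List.head?_cons, Option.map_some] at hhead
    have hp2 : p.2 = false := by simpa using hhead
    cases r with
    | nil =>
      simp only [List.getLast?_singleton, Option.map_some] at hlast
      have : p.2 = true := by simpa using hlast
      simp [hp2] at this
    | cons q r' =>
      simp only [List.map_cons, List.sum_cons] at hsum
      have h1 := hpos p (by simp)
      have h2 := hpos q (by simp)
      omega

lemma VSet_zero_uncircled (n : ℕ) : VSet n 0 = ∅ := by
  ext l
  simp only [VSet, TSet, Set.mem_setOf_eq, Set.mem_empty_iff_false, iff_false]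
  rintro ⟨⟨hpos, hcir, hsum, hlast, hfil⟩, hhead⟩
  cases l with
  | nil => simp at hhead
  | cons p r =>
    simp only [List.head?_cons, Option.map_some] at hhead
    have hp2 : p.2 = false := by simpa using hhead
    rw [List.length_eq_zero_iff] at hfil
    have : p ∈ List.filter (fun p => !p.2) (p :: r) := by
      simp [List.mem_filter, hp2]
    rw [hfil] at this
    simp at this

/-- The key recurrence for `TSet`: peel the head. -/
lemma TSet_succ (n i : ℕ) (hn : 1 ≤ n) :
    TSet (n + 1) i = (List.cons (1, true)) '' TSet n i ∪ VSet (n + 1) i := by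
  ext l
  constructor
  · rintro ⟨hpos, hcir, hsum, hlast, hfil⟩
    cases l with
    | nil => simp at hlast
    | cons p r =>
      rcases p with ⟨a, b⟩
      cases b with
      | false =>
        right
        exact ⟨⟨hpos, hcir, hsum, hlast, hfil⟩, by simp⟩
      | true =>
        left
        have ha : a = 1 := hcir (a, true) (by simp) rfl
        subst ha
        refine ⟨r, ?_, rfl⟩
        have hrne : r ≠ [] := by
          rintro rfl
          simp only [List.map_cons, List.map_nil, List.sum_cons, List.sum_nil] at hsum
          omega
        obtain ⟨q, r', rfl⟩ := List.exists_cons_of_ne_nil hrne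
        refine ⟨fun q hq => hpos q (by simp [hq]),
          fun q hq => hcir q (by simp [hq]),
          ?_, ?_, ?_⟩
        · simp only [List.map_cons, List.sum_cons] at hsum ⊢
          omega
        · rwa [List.getLast?_cons_cons] at hlast
        · simpa using hfil
  · rintro (⟨t, ⟨hpos, hcir, hsum, hlast, hfil⟩, rfl⟩ | ⟨ht, hhead⟩)
    · have htne : t ≠ [] := by
        rintro rfl
        simp at hsum
        omega
      obtain ⟨q, r', rfl⟩ := List.exists_cons_of_ne_nil htne
      refine ⟨?_, ?_, ?_, ?_, ?_⟩
      · rintro p hp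
        rcases List.mem_cons.mp hp with rfl | hp
        · simp
        · exact hpos p hp
      · rintro p hp
        rcases List.mem_cons.mp hp with rfl | hp
        · intro; rfl
        · exact hcir p hp
      · simp only [List.map_cons, List.sum_cons] at hsum ⊢
        omega
      · rwa [List.getLast?_cons_cons]
      · simpa using hfil
    · exact ht

lemma TSet_succ_disjoint (n i : ℕ) :
    Disjoint ((List.cons (1, true)) '' TSet n i) (VSet (n + 1) i) := by
  rw [Set.disjoint_left]
  rintro l ⟨t, -, rfl⟩ ⟨-, hhead⟩
  simp at hhead

/-- The key recurrence for `VSet`: heads with value `1` come from dropping the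
head, bigger heads from `bump`. -/
lemma VSet_succ (n i : ℕ) (hn : 1 ≤ n) :
    VSet (n + 1) (i + 1) =
      (List.cons (1, false)) '' TSet n i ∪ bump '' VSet n (i + 1) := by
  ext l
  constructor
  · rintro ⟨⟨hpos, hcir, hsum, hlast, hfil⟩, hhead⟩
    cases l with
    | nil => simp at hhead
    | cons p r =>
      rcases p with ⟨a, b⟩
      simp only [List.head?_cons, Option.map_some] at hhead
      have hb : b = false := by simpa using hhead
      subst hb
      have hrne : r ≠ [] := by
        rintro rfl
        simp only [List.getLast?_singleton, Option.map_some] at hlast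
        simp at hlast
      obtain ⟨q, r', rfl⟩ := List.exists_cons_of_ne_nil hrne
      have ha : 0 < a := hpos (a, false) (by simp)
      rcases Nat.lt_or_ge a 2 with ha2 | ha2
      · -- a = 1 : drop the head
        have ha1 : a = 1 := by omega
        subst ha1
        left
        refine ⟨q :: r', ⟨fun p hp => hpos p (by simp [hp]),
          fun p hp => hcir p (by simp [hp]), ?_, ?_, ?_⟩, rfl⟩
        · simp only [List.map_cons, List.sum_cons] at hsum ⊢
          omega
        · rwa [List.getLast?_cons_cons] at hlast
        · have h := hfil
          rw [show ((1:ℕ), false) :: q :: r' = [(1, false)] ++ q :: r' from rfl,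
            List.filter_append, List.length_append] at h
          simp at h
          omega
      · -- a ≥ 2 : decrement the head
        right
        refine ⟨(a - 1, false) :: q :: r', ⟨⟨fun p hp => ?_,
          fun p hp => ?_, ?_, ?_, ?_⟩, by simp⟩, ?_⟩
        · rcases List.mem_cons.mp hp with rfl | hp
          · simp; omega
          · exact hpos p (by simp [hp])
        · rcases List.mem_cons.mp hp with rfl | hp
          · simp
          · exact hcir p (by simp [hp])
        · simp only [List.map_cons, List.sum_cons] at hsum ⊢
          omega
        · rwa [List.getLast?_cons_cons] at hlast ⊢
        · simp only [List.filter_cons] at hfil ⊢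
          simpa using hfil
        · show (a - 1 + 1, false) :: q :: r' = _
          congr 2
          omega
  · rintro (⟨t, ⟨hpos, hcir, hsum, hlast, hfil⟩, rfl⟩ | ⟨t, ⟨⟨hpos, hcir, hsum, hlast, hfil⟩, hhead⟩, rfl⟩)
    · have htne : t ≠ [] := by
        rintro rfl
        simp at hsum
        omega
      obtain ⟨q, r', rfl⟩ := List.exists_cons_of_ne_nil htne
      refine ⟨⟨?_, ?_, ?_, ?_, ?_⟩, by simp⟩
      · rintro p hp
        rcases List.mem_cons.mp hp with rfl | hp
        · simp
        · exact hpos p hp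
      · rintro p hp
        rcases List.mem_cons.mp hp with rfl | hp
        · simp
        · exact hcir p hp
      · simp only [List.map_cons, List.sum_cons] at hsum ⊢
        omega
      · rwa [List.getLast?_cons_cons]
      · simp only [List.filter_cons] at hfil ⊢
        simpa using hfil
    · cases t with
      | nil => simp at hhead
      | cons p r =>
        rcases p with ⟨a, b⟩
        simp only [List.head?_cons, Option.map_some] at hhead
        have hb : b = false := by simpa using hhead
        subst hb
        show ((a + 1, false) :: r) ∈ _
        have hrne : r ≠ [] := by
          rintro rfl
          simp only [List.getLast?_singleton, Option.map_some] at hlast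
          simp at hlast
        obtain ⟨q, r', rfl⟩ := List.exists_cons_of_ne_nil hrne
        refine ⟨⟨fun p hp => ?_, fun p hp => ?_, ?_, ?_, ?_⟩, by simp⟩
        · rcases List.mem_cons.mp hp with rfl | hp
          · simp
          · exact hpos p (by simp [hp])
        · rcases List.mem_cons.mp hp with rfl | hp
          · simp
          · exact hcir p (by simp [hp])
        · simp only [List.map_cons, List.sum_cons] at hsum ⊢
          omega
        · rwa [List.getLast?_cons_cons] at hlast ⊢
        · simp only [List.filter_cons] at hfil ⊢
          simpa using hfil

lemma VSet_succ_disjoint (n i : ℕ) :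
    Disjoint ((List.cons (1, false)) '' TSet n i) (bump '' VSet n (i + 1)) := by
  rw [Set.disjoint_left]
  rintro l ⟨t, -, rfl⟩ ⟨s, ⟨⟨hpos, -, -, -, -⟩, -⟩, hs⟩
  cases s with
  | nil => simp [bump] at hs
  | cons p r =>
    rcases p with ⟨a, b⟩
    have ha : 0 < a := hpos (a, b) (by simp)
    simp only [bump] at hs
    have h2 := congrArg List.head? hs
    simp only [List.head?_cons] at h2
    have : (a + 1, b) = ((1 : ℕ), false) := by
      simpa using h2
    have h3 : a + 1 = 1 := congrArg Prod.fst this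
    omega

lemma bump_injOn (n i : ℕ) : Set.InjOn bump (VSet n i) := by
  rintro l ⟨-, hl⟩ m ⟨-, hm⟩ h
  cases l with
  | nil => simp at hl
  | cons p r =>
    cases m with
    | nil => simp at hm
    | cons q s =>
      rcases p with ⟨a, b⟩
      rcases q with ⟨c, d⟩
      simp only [bump, List.cons.injEq, Prod.mk.injEq] at h
      obtain ⟨⟨h1, h2⟩, h3⟩ := h
      subst h2 h3
      have : a = c := by omega
      subst this
      rfl

/-- The joint cardinality computation, by induction. -/
lemma card_T_V : ∀ n, 1 ≤ n → ∀ i,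
    (TSet n i).ncard = (n + i - 1).choose (2 * i) ∧
    (VSet n i).ncard = if i = 0 then 0 else (n + i - 2).choose (2 * i - 1) := by
  intro n
  induction n with
  | zero => omega
  | succ n ih =>
    intro _ i
    rcases Nat.eq_zero_or_pos n with rfl | hn
    · -- n + 1 = 1
      constructor
      · cases i with
        | zero => rw [TSet_one_zero]; simp
        | succ j =>
          rw [TSet_one_succ]
          rw [Set.ncard_empty, eq_comm, Nat.choose_eq_zero_of_lt]
          omega
      · rw [VSet_one, Set.ncard_empty]
        cases i with
        | zero => simp
        | succ j =>
          rw [if_neg (by omega), eq_comm, Nat.choose_eq_zero_of_lt]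
          omega
    · -- n ≥ 1
      obtain ⟨d, rfl⟩ : ∃ d, n = d + 1 := ⟨n - 1, by omega⟩
      have ihn := ih hn
      have hV : (VSet (d + 1 + 1) i).ncard =
          if i = 0 then 0 else (d + 1 + 1 + i - 2).choose (2 * i - 1) := by
        cases i with
        | zero => rw [VSet_zero_uncircled]; simp
        | succ j =>
          rw [VSet_succ (d + 1) j hn,
            Set.ncard_union_eq (VSet_succ_disjoint (d + 1) j)
              (((finite_T (d + 1) j).image _))
              ((finite_V (d + 1) (j + 1)).image _),
            Set.ncard_image_of_injective _ (List.cons_injective),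
            Set.ncard_image_of_injOn (bump_injOn (d + 1) (j + 1)),
            (ihn j).1, (ihn (j + 1)).2, if_neg (by omega)]
          rw [if_neg (by omega)]
          have e1 : d + 1 + j - 1 = d + j := by omega
          have e2 : d + 1 + (j + 1) - 2 = d + j := by omega
          have e3 : 2 * (j + 1) - 1 = 2 * j + 1 := by omega
          have e4 : d + 1 + 1 + (j + 1) - 2 = d + j + 1 := by omega
          rw [e1, e2, e3, e4]
          exact (Nat.choose_succ_succ' (d + j) (2 * j)).symm
      constructor
      · rw [TSet_succ (d + 1) i hn,
          Set.ncard_union_eq (TSet_succ_disjoint (d + 1) i)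
            ((finite_T (d + 1) i).image _) (finite_V (d + 1 + 1) i),
          Set.ncard_image_of_injective _ (List.cons_injective),
          (ihn i).1, hV]
        cases i with
        | zero => simp
        | succ j =>
          rw [if_neg (by omega)]
          have e1 : d + 1 + (j + 1) - 1 = d + j + 1 := by omega
          have e2 : d + 1 + 1 + (j + 1) - 2 = d + j + 1 := by omega
          have e3 : d + 1 + 1 + (j + 1) - 1 = d + j + 2 := by omega
          have e4 : 2 * (j + 1) = 2 * j + 1 + 1 := by omega
          have e5 : 2 * (j + 1) - 1 = 2 * j + 1 := by omega
          rw [e1, e2, e3, e5, e4, Nat.choose_succ_succ' (d + j + 1) (2 * j + 1)]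
          omega
      · exact hV

end CircledAux

/-- For `n ≥ 2`, the number of circled compositions of `n` with exactly `i`
uncircled parts is `C(n+i-2, 2i)`. -/
theorem circled_comp_uncircled_count (n i : ℕ) (hn : 2 ≤ n) :
    {l : List (ℕ × Bool) | IsCircledComp n l ∧
      (l.filter (fun p => !p.2)).length = i}.ncard
      = (n + i - 2).choose (2 * i) := by
  obtain ⟨m, rfl⟩ := Nat.exists_eq_add_of_le hn
  have hm : 1 ≤ 1 + m := by omega
  have hset : {l : List (ℕ × Bool) | IsCircledComp (2 + m) l ∧
      (l.filter (fun p => !p.2)).length = i} =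
      (List.cons (1, true)) '' CircledAux.TSet (1 + m) i := by
    ext l
    constructor
    · rintro ⟨⟨hpos, hcir, hsum, hhead, hlast⟩, hfil⟩
      cases l with
      | nil => simp at hhead
      | cons p r =>
        rcases p with ⟨a, b⟩
        simp only [List.head?_cons, Option.map_some] at hhead
        have hb : b = true := by simpa using hhead
        subst hb
        have ha : a = 1 := hcir (a, true) (by simp) rfl
        subst ha
        refine ⟨r, ?_, rfl⟩
        have hrne : r ≠ [] := by
          rintro rfl
          simp at hsum
          omega
        obtain ⟨q, r', rfl⟩ := List.exists_cons_of_ne_nil hrne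
        refine ⟨fun p hp => hpos p (by simp [hp]),
          fun p hp => hcir p (by simp [hp]), ?_, ?_, ?_⟩
        · simp only [List.map_cons, List.sum_cons] at hsum ⊢
          omega
        · rwa [List.getLast?_cons_cons] at hlast
        · simpa using hfil
    · rintro ⟨t, ⟨hpos, hcir, hsum, hlast, hfil⟩, rfl⟩
      have htne : t ≠ [] := by
        rintro rfl
        simp at hsum
        omega
      obtain ⟨q, r', rfl⟩ := List.exists_cons_of_ne_nil htne
      refine ⟨⟨?_, ?_, ?_, by simp, ?_⟩, ?_⟩
      · rintro p hp
        rcases List.mem_cons.mp hp with rfl | hp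
        · simp
        · exact hpos p hp
      · rintro p hp
        rcases List.mem_cons.mp hp with rfl | hp
        · intro; rfl
        · exact hcir p hp
      · simp only [List.map_cons, List.sum_cons] at hsum ⊢
        omega
      · rwa [List.getLast?_cons_cons]
      · simpa using hfil
  rw [hset, Set.ncard_image_of_injective _ (List.cons_injective),
    (CircledAux.card_T_V (1 + m) hm i).1]
  congr 1
  omega
end

section
/- For n ≥ 3, the number of circled compositions of n in which all uncircled parts occur in consecutive positions equals 2^{n-1} - (n-1). -/
set_option maxRecDepth 8000


/-- `a` circled ones. -/
def CCrep (a : ℕ) : List (ℕ × Bool) := List.replicate a (1, true)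

/-- The canonical circled composition associated to a list of blocks. -/
def CCPhi : List ℕ → List (ℕ × Bool)
  | [] => []
  | a :: rest => CCrep a ++ rest.dropLast.map (fun x => (x, false)) ++ CCrep (rest.getLastD 0)

lemma CCPhi_eq (a b : ℕ) (m : List ℕ) :
    CCPhi (a :: (m ++ [b])) = CCrep a ++ m.map (fun x => (x, false)) ++ CCrep b := by
  simp [CCPhi, List.dropLast_concat, List.getLastD_concat]

lemma CCrep_sum (a : ℕ) : ((CCrep a).map Prod.fst).sum = a := by
  simp [CCrep, List.map_replicate]

lemma mem_CCrep {p : ℕ × Bool} {a : ℕ} (h : p ∈ CCrep a) : p = (1, true) :=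
  (List.eq_of_mem_replicate h)

/-- length of leading trues determines `a`. -/
lemma CC_takeWhile (a x : ℕ) (r : List (ℕ × Bool)) :
    ((CCrep a ++ (x, false) :: r).takeWhile (fun p => p.2)).length = a := by
  induction a with
  | zero => simp [CCrep]
  | succ a ih =>
      simp only [CCrep, List.replicate_succ, List.cons_append, List.takeWhile_cons_of_pos,
        List.length_cons]
      rw [show (List.replicate a ((1 : ℕ), true) : List (ℕ × Bool)) = CCrep a from rfl] at *
      simpa using ih

lemma CC_key2 : ∀ (m m' : List ℕ) (b b' : ℕ), 1 ≤ b → 1 ≤ b' →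
    m.map (fun x => (x, false)) ++ CCrep b = m'.map (fun x => (x, false)) ++ CCrep b' →
    m = m' ∧ b = b' := by
  intro m
  induction m with
  | nil =>
      intro m' b b' hb hb' h
      cases m' with
      | nil =>
          refine ⟨rfl, ?_⟩
          have := congrArg List.length h
          simpa [CCrep] using this
      | cons x t =>
          exfalso
          cases b with
          | zero => omega
          | succ b => simp [CCrep, List.replicate_succ] at h
  | cons x t ih =>
      intro m' b b' hb hb' h
      cases m' with
      | nil =>
          exfalso
          cases b' with
          | zero => omega
          | succ b' => simp [CCrep, List.replicate_succ] at h
      | cons x' t' =>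
          simp only [List.map_cons, List.cons_append, List.cons.injEq, Prod.mk.injEq] at h
          obtain ⟨⟨rfl, -⟩, h⟩ := h
          obtain ⟨h1, h2⟩ := ih t' b b' hb hb' h
          exact ⟨by rw [h1], h2⟩

lemma CC_key {a b a' b' : ℕ} {m m' : List ℕ} (ha : 1 ≤ a) (hb : 1 ≤ b)
    (ha' : 1 ≤ a') (hb' : 1 ≤ b') (hm : m ≠ []) (hm' : m' ≠ [])
    (h : CCrep a ++ m.map (fun x => (x, false)) ++ CCrep b
       = CCrep a' ++ m'.map (fun x => (x, false)) ++ CCrep b') :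
    a = a' ∧ m = m' ∧ b = b' := by
  obtain ⟨x, t, rfl⟩ := List.exists_cons_of_ne_nil hm
  obtain ⟨x', t', rfl⟩ := List.exists_cons_of_ne_nil hm'
  have haa : a = a' := by
    have h1 := congrArg (fun l => (l.takeWhile (fun p : ℕ × Bool => p.2)).length) h
    simpa [List.append_assoc, CC_takeWhile] using h1
  subst haa
  rw [List.append_assoc, List.append_assoc] at h
  have h2 := List.append_cancel_left h
  have := CC_key2 _ _ _ _ hb hb' h2
  exact ⟨rfl, this.1, this.2⟩

/-- the "good" set of compositions -/
def CCGood (n : ℕ) : Set (Composition n) :=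
  {c | 2 ≤ c.blocks.length ∧ (c.blocks.length = 2 → c.blocks.headI = 1)}

lemma CC_blocks_decomp {n : ℕ} (c : Composition n) (h : 2 ≤ c.blocks.length) :
    ∃ a m b, c.blocks = a :: (m ++ [b]) := by
  cases hb : c.blocks with
  | nil => rw [hb] at h; simp at h
  | cons a t =>
      have ht : t ≠ [] := by
        rw [hb] at h
        intro h0; rw [h0] at h; simp at h
      refine ⟨a, t.dropLast, t.getLast ht, ?_⟩
      rw [List.dropLast_append_getLast ht]

lemma CC_bad_iff {n : ℕ} (hn : 3 ≤ n) (c : Composition n) :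
    c ∈ (CCGood n)ᶜ ↔ c.blocks = [n] ∨ ∃ x, 2 ≤ x ∧ x < n ∧ c.blocks = [x, n - x] := by
  have hsum := c.blocks_sum
  constructor
  · intro hc
    simp only [CCGood, Set.mem_compl_iff, Set.mem_setOf_eq, not_and, not_forall] at hc
    rcases hbl : c.blocks with _ | ⟨x, _ | ⟨y, _ | ⟨z, t⟩⟩⟩
    · rw [hbl] at hsum; simp at hsum; omega
    · left; rw [hbl] at hsum; simp at hsum; rw [hsum]
    · right
      rw [hbl] at hsum hc
      have hx : 0 < x := c.blocks_pos (by rw [hbl]; simp)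
      have hy : 0 < y := c.blocks_pos (by rw [hbl]; simp)
      obtain ⟨-, h1⟩ := hc (by simp)
      simp at hsum h1
      refine ⟨x, by omega, by omega, ?_⟩
      have : y = n - x := by omega
      rw [this]
    · exfalso
      obtain ⟨h2, -⟩ := hc (by rw [hbl]; simp)
      rw [hbl] at h2; simp at h2
  · intro hc
    simp only [CCGood, Set.mem_compl_iff, Set.mem_setOf_eq, not_and, not_forall]
    rcases hc with h | ⟨x, hx2, hxn, h⟩
    · intro h2; rw [h] at h2; simp at h2
    · intro _; refine ⟨by rw [h]; rfl, ?_⟩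
      rw [h]; simp; omega

lemma CC_bad_ncard {n : ℕ} (hn : 3 ≤ n) : (CCGood n)ᶜ.ncard = n - 1 := by
  have hinj : Set.InjOn (fun c : Composition n => c.blocks.headI) ((CCGood n)ᶜ) := by
    intro c hc c' hc' h
    rw [CC_bad_iff hn] at hc hc'
    apply Composition.ext
    rcases hc with h1 | ⟨x, hx2, hxn, h1⟩ <;> rcases hc' with h2 | ⟨x', hx2', hxn', h2⟩ <;>
        simp only [h1, h2, List.headI] at h ⊢ <;>
      first
        | rfl
        | exact absurd h (by omega)
        | (subst h; rfl)
  have himg : (fun c : Composition n => c.blocks.headI) '' ((CCGood n)ᶜ) = Set.Icc 2 n := by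
    ext k
    constructor
    · rintro ⟨c, hc, rfl⟩
      rw [CC_bad_iff hn] at hc
      rcases hc with h1 | ⟨x, hx2, hxn, h1⟩ <;> simp [h1, Set.mem_Icc] <;> omega
    · intro hk
      simp only [Set.mem_Icc] at hk
      by_cases h : k = n
      · refine ⟨⟨[n], ?_, by simp⟩, ?_, by simp [h]⟩
        · intro i hi; simp at hi; omega
        · rw [CC_bad_iff hn]; left; rfl
      · refine ⟨⟨[k, n - k], ?_, by simp; omega⟩, ?_, rfl⟩
        · intro i hi; simp at hi; rcases hi with rfl | rfl <;> omega
        · rw [CC_bad_iff hn]; right; exact ⟨k, hk.1, by omega, rfl⟩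
  have := Set.ncard_image_of_injOn hinj
  rw [himg] at this
  rw [← this, ← Nat.card_coe_set_eq]
  simp [Nat.card_Icc]

lemma CC_inj {n : ℕ} (hn : 3 ≤ n) :
    Set.InjOn (fun c : Composition n => CCPhi c.blocks) (CCGood n) := by
  intro c hc c' hc' h
  obtain ⟨a, m, b, hb⟩ := CC_blocks_decomp c hc.1
  obtain ⟨a', m', b', hb'⟩ := CC_blocks_decomp c' hc'.1
  simp only [hb, hb', CCPhi_eq] at h
  have hap : 0 < a := c.blocks_pos (by rw [hb]; simp)
  have hbp : 0 < b := c.blocks_pos (by rw [hb]; simp)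
  have hap' : 0 < a' := c'.blocks_pos (by rw [hb']; simp)
  have hbp' : 0 < b' := c'.blocks_pos (by rw [hb']; simp)
  apply Composition.ext
  rw [hb, hb']
  rcases m with _ | ⟨x, t⟩ <;> rcases m' with _ | ⟨x', t'⟩
  · have ha1 : a = 1 := by
      have := hc.2 (by rw [hb]; rfl)
      rw [hb] at this; simpa using this
    have ha1' : a' = 1 := by
      have := hc'.2 (by rw [hb']; rfl)
      rw [hb'] at this; simpa using this
    subst ha1; subst ha1'
    have hlen := congrArg List.length h
    simp [CCrep] at hlen
    have hbb : b = b' := by omega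
    rw [hbb]
  · exfalso
    have hmem : ((x', false) : ℕ × Bool)
        ∈ CCrep a' ++ (x' :: t').map (fun x => (x, false)) ++ CCrep b' := by simp
    rw [← h] at hmem
    simp [CCrep, List.mem_append, List.mem_replicate] at hmem
  · exfalso
    have hmem : ((x, false) : ℕ × Bool)
        ∈ CCrep a ++ (x :: t).map (fun x => (x, false)) ++ CCrep b := by simp
    rw [h] at hmem
    simp [CCrep, List.mem_append, List.mem_replicate] at hmem
  · obtain ⟨h1, h2, h3⟩ := CC_key hap hbp hap' hbp' (by simp) (by simp) h
    rw [h1, h2, h3]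

theorem CC_aux (n : ℕ) (hn : 3 ≤ n) :
    {l : List (ℕ × Bool) | IsCircledComp n l ∧
      ∃ pre mid post : List (ℕ × Bool), l = pre ++ mid ++ post ∧
        (∀ p ∈ pre, p.2 = true) ∧ (∀ p ∈ mid, p.2 = false) ∧
        (∀ p ∈ post, p.2 = true)}
      = (fun c : Composition n => CCPhi c.blocks) '' (CCGood n) := by
  ext l
  simp only [Set.mem_setOf_eq, Set.mem_image]
  constructor
  · rintro ⟨⟨hpos, hone, hsum, hhead, hlast⟩, pre, mid, post, rfl, hpre, hmid, hpost⟩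
    have hpre' : pre = CCrep pre.length := by
      rw [CCrep, List.eq_replicate_iff]
      refine ⟨rfl, fun p hp => ?_⟩
      have h2 := hpre p hp
      have h1 := hone p (List.mem_append_left _ (List.mem_append_left _ hp)) h2
      exact Prod.ext h1 h2
    have hpost' : post = CCrep post.length := by
      rw [CCrep, List.eq_replicate_iff]
      refine ⟨rfl, fun p hp => ?_⟩
      have h2 := hpost p hp
      have h1 := hone p (List.mem_append_right _ hp) h2
      exact Prod.ext h1 h2
    have hmid2 : (mid.map Prod.fst).map (fun x => (x, false)) = mid := by
      rw [List.map_map]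
      have hc : ∀ p ∈ mid, ((fun x => (x, false)) ∘ Prod.fst) p = id p := by
        intro p hp; exact Prod.ext rfl (hmid p hp).symm
      rw [List.map_congr_left hc, List.map_id]
    cases mid with
    | nil =>
        have hn' : pre.length + post.length = n := by
          rw [hpre', hpost'] at hsum
          simpa [CCrep, List.map_replicate] using hsum
        refine ⟨⟨1 :: ([] ++ [n - 1]), ?_, ?_⟩, ⟨?_, ?_⟩, ?_⟩
        · intro i hi; simp at hi; omega
        · simp; omega
        · simp
        · intro _; rfl
        · show CCPhi (1 :: ([] ++ [n - 1])) = pre ++ [] ++ post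
          rw [CCPhi_eq]
          rw [hpre', hpost']
          simp only [List.map_nil, List.append_nil, List.nil_append]
          rw [CCrep, CCrep, CCrep, CCrep, ← List.replicate_add, ← List.replicate_add]
          congr 1
          omega
    | cons x xs =>
        have hprene : pre ≠ [] := by
          intro h0; subst h0
          simp at hhead
          have hx2 := hmid x (by simp)
          exact absurd (hx2.symm.trans hhead) (by decide)
        have hpostne : post ≠ [] := by
          intro h0; subst h0
          have hx : (x :: xs) ≠ [] := by simp
          rw [List.append_nil, List.getLast?_append, List.getLast?_eq_getLast hx] at hlast
          simp at hlast
          have hx2 := hmid _ (List.getLast_mem hx)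
          exact absurd (hx2.symm.trans hlast) (by decide)
        refine ⟨⟨pre.length :: (((x :: xs).map Prod.fst) ++ [post.length]), ?_, ?_⟩,
          ⟨?_, ?_⟩, ?_⟩
        · intro i hi
          simp only [List.mem_cons, List.mem_append, List.mem_map, List.mem_singleton,
            List.not_mem_nil, or_false] at hi
          rcases hi with rfl | (⟨p, hp, rfl⟩ | rfl)
          · exact List.length_pos_iff.2 hprene
          · exact hpos p (List.mem_append_left _ (List.mem_append_right _ (List.mem_cons.2 hp)))
          · exact List.length_pos_iff.2 hpostne
        · have := hsum
          rw [hpre', hpost'] at this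
          simp only [List.map_append, List.sum_append, CCrep, List.map_replicate,
            List.sum_replicate, smul_eq_mul, mul_one] at this
          simp only [Composition.blocks, List.sum_cons, List.sum_append,
            List.sum_singleton, List.sum_nil]
          omega
        · simp
        · intro h; simp at h
        · show CCPhi (pre.length :: ((x :: xs).map Prod.fst ++ [post.length]))
            = pre ++ (x :: xs) ++ post
          rw [CCPhi_eq, hmid2, ← hpre', ← hpost']
  · rintro ⟨c, hc, rfl⟩
    obtain ⟨a, m, b, hb⟩ := CC_blocks_decomp c hc.1
    have hap : 0 < a := c.blocks_pos (by rw [hb]; simp)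
    have hbp : 0 < b := c.blocks_pos (by rw [hb]; simp)
    have hmp : ∀ x ∈ m, 0 < x := fun x hx => c.blocks_pos (by rw [hb]; simp [hx])
    have hsum : a + (m.sum + b) = n := by
      have := c.blocks_sum
      rw [hb] at this
      simpa using this
    simp only [hb, CCPhi_eq]
    refine ⟨⟨?_, ?_, ?_, ?_, ?_⟩, CCrep a, m.map (fun x => (x, false)), CCrep b, rfl,
      fun p hp => by rw [mem_CCrep hp],
      fun p hp => by obtain ⟨x, hx, rfl⟩ := List.mem_map.1 hp; rfl,
      fun p hp => by rw [mem_CCrep hp]⟩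
    · intro p hp
      simp only [List.mem_append, List.mem_map] at hp
      rcases hp with (hp | ⟨x, hx, rfl⟩) | hp
      · rw [mem_CCrep hp]; norm_num
      · exact hmp x hx
      · rw [mem_CCrep hp]; norm_num
    · intro p hp ht
      simp only [List.mem_append, List.mem_map] at hp
      rcases hp with (hp | ⟨x, hx, rfl⟩) | hp
      · rw [mem_CCrep hp]
      · simp at ht
      · rw [mem_CCrep hp]
    · simp only [List.map_append, List.sum_append, List.map_map, CCrep,
        List.map_replicate, List.sum_replicate, smul_eq_mul, mul_one]
      have hmm : List.map (Prod.fst ∘ fun x => (x, false)) m = m := by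
        simp [Function.comp_def]
      rw [hmm]
      omega
    · obtain ⟨a', rfl⟩ : ∃ a', a = a' + 1 := ⟨a - 1, by omega⟩
      simp [CCrep, List.replicate_succ]
    · obtain ⟨b', rfl⟩ : ∃ b', b = b' + 1 := ⟨b - 1, by omega⟩
      rw [show CCrep (b' + 1) = CCrep b' ++ [((1 : ℕ), true)] by
        simp [CCrep, List.replicate_succ']]
      rw [← List.append_assoc, List.getLast?_concat]
      rfl

/-- For `n ≥ 3`, the number of circled compositions of `n` in which the
uncircled parts occupy consecutive positions is `2^(n-1) - (n-1)`. -/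
theorem circled_comp_consecutive_count (n : ℕ) (hn : 3 ≤ n) :
    {l : List (ℕ × Bool) | IsCircledComp n l ∧
      ∃ pre mid post : List (ℕ × Bool), l = pre ++ mid ++ post ∧
        (∀ p ∈ pre, p.2 = true) ∧ (∀ p ∈ mid, p.2 = false) ∧
        (∀ p ∈ post, p.2 = true)}.ncard
      = 2 ^ (n - 1) - (n - 1) := by
  rw [CC_aux n hn, Set.ncard_image_of_injOn (CC_inj hn)]
  have hcompl := CC_bad_ncard (n := n) hn
  have htot : (CCGood n).ncard + (CCGood n)ᶜ.ncard = 2 ^ (n - 1) := by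
    rw [Set.ncard_add_ncard_compl, Nat.card_eq_fintype_card, composition_card]
  omega
end
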